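/- arXiv:1901.00904 — 7 statements merged into one kernel-verified Lean document; each statement's English description precedes it below -/
import Mathlib

section
/- Let R be a commutative ring, m ≥ 1, and let A be a 2m×2m matrix over R with m×m blocks A11, A12, A21, A22. Let Δ := det(A11) • A22 − A21 · adj(A11) · A12 be the fraction-free Schur complement, where adj denotes the adjugate matrix. Then det(Δ) = det(A) · det(A11)^(m−1). -/
open Matrix MvPolynomial

/-- Fraction-free identity valid over any commutative ring. -/
lemma ff_key {S : Type*} [CommRing S] (m : ℕ)
    (A11 A12 A21 A22 : Matrix (Fin m) (Fin m) S) :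
    A11.det ^ (m - 1) * A11.det ^ m * (fromBlocks A11 A12 A21 A22).det =
      A11.det ^ m * (A11.det • A22 - A21 * A11.adjugate * A12).det := by
  set d := A11.det with hd
  set Δ := d • A22 - A21 * A11.adjugate * A12 with hΔ
  set N : Matrix (Fin m ⊕ Fin m) (Fin m ⊕ Fin m) S :=
    fromBlocks A11.adjugate 0 (-(A21 * A11.adjugate)) (d • 1) with hN
  have hNM : N * fromBlocks A11 A12 A21 A22 =
      fromBlocks (d • 1) (A11.adjugate * A12) 0 Δ := by
    rw [hN, fromBlocks_multiply, Matrix.zero_mul, Matrix.zero_mul, add_zero, add_zero,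
      adjugate_mul, Matrix.neg_mul, mul_assoc, adjugate_mul, Matrix.mul_smul, Matrix.mul_one,
      smul_mul_assoc, Matrix.one_mul, neg_add_cancel, hΔ, Matrix.neg_mul,
      smul_mul_assoc, Matrix.one_mul, neg_add_eq_sub, ← hd]
  have h := congrArg Matrix.det hNM
  rw [det_mul, hN, det_fromBlocks_zero₁₂, det_fromBlocks_zero₂₁,
    det_adjugate, det_smul, det_one, mul_one, Fintype.card_fin] at h
  exact h

/-- For a commutative ring `R`, `m ≥ 1`, and a `2m × 2m` matrix over `R`
with `m × m` blocks `A11, A12, A21, A22`, the fraction-free Schur complement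
`Δ = det(A11) • A22 - A21 * adj(A11) * A12` satisfies
`det Δ = det A * det(A11) ^ (m - 1)`. -/
theorem det_ffSchurComplement {R : Type*} [CommRing R] (m : ℕ) (hm : 1 ≤ m)
    (A11 A12 A21 A22 : Matrix (Fin m) (Fin m) R) :
    (A11.det • A22 - A21 * A11.adjugate * A12).det =
      (Matrix.fromBlocks A11 A12 A21 A22).det * A11.det ^ (m - 1) := by
  -- the generic matrix
  set S := MvPolynomial ((Fin m ⊕ Fin m) × (Fin m ⊕ Fin m)) ℤ
  set B : Matrix (Fin m ⊕ Fin m) (Fin m ⊕ Fin m) S :=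
    mvPolynomialX (Fin m ⊕ Fin m) (Fin m ⊕ Fin m) ℤ with hB
  set B11 := B.toBlocks₁₁ with hB11
  set B12 := B.toBlocks₁₂
  set B21 := B.toBlocks₂₁
  set B22 := B.toBlocks₂₂
  -- det of the generic top-left block is nonzero
  have hdet : B11.det ≠ 0 := by
    set g : S →+* MvPolynomial (Fin m × Fin m) ℤ :=
      (MvPolynomial.eval₂Hom MvPolynomial.C fun p =>
        match p with
        | (Sum.inl i, Sum.inl j) => MvPolynomial.X (i, j)
        | _ => 0) with hg
    have hmap : g.mapMatrix B11 = mvPolynomialX (Fin m) (Fin m) ℤ := by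
      ext i j
      simp only [RingHom.mapMatrix_apply, Matrix.map_apply, mvPolynomialX_apply]
      rw [show B11 i j = (MvPolynomial.X (Sum.inl i, Sum.inl j) : S) from rfl, hg,
        MvPolynomial.eval₂Hom_X']
    intro h0
    have h1 := congrArg g h0
    rw [RingHom.map_det, hmap, map_zero] at h1
    exact det_mvPolynomialX_ne_zero (Fin m) ℤ h1
  -- generic identity, by cancellation in the domain S
  have hgen : (B11.det • B22 - B21 * B11.adjugate * B12).det =
      (fromBlocks B11 B12 B21 B22).det * B11.det ^ (m - 1) := by
    apply mul_left_cancel₀ (pow_ne_zero m hdet)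
    have := ff_key m B11 B12 B21 B22
    rw [← this]; ring
  -- specialize to A via the evaluation homomorphism
  set φ : S →+* R :=
    (MvPolynomial.eval₂Hom (Int.castRingHom R) fun p =>
      fromBlocks A11 A12 A21 A22 p.1 p.2) with hφ
  have hBmap : φ.mapMatrix B = fromBlocks A11 A12 A21 A22 := by
    rw [RingHom.mapMatrix_apply, hB, hφ]
    exact mvPolynomialX_map_eval₂ _ _
  have h11 : φ.mapMatrix B11 = A11 := by
    ext i j
    have := congrFun (congrFun hBmap (Sum.inl i)) (Sum.inl j)
    simpa [hB11, toBlocks₁₁, fromBlocks] using this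
  have h12 : φ.mapMatrix B12 = A12 := by
    ext i j
    have := congrFun (congrFun hBmap (Sum.inl i)) (Sum.inr j)
    simpa [B12, toBlocks₁₂, fromBlocks] using this
  have h21 : φ.mapMatrix B21 = A21 := by
    ext i j
    have := congrFun (congrFun hBmap (Sum.inr i)) (Sum.inl j)
    simpa [B21, toBlocks₂₁, fromBlocks] using this
  have h22 : φ.mapMatrix B22 = A22 := by
    ext i j
    have := congrFun (congrFun hBmap (Sum.inr i)) (Sum.inr j)
    simpa [B22, toBlocks₂₂, fromBlocks] using this
  have hsmul : ∀ (c : S) (M : Matrix (Fin m) (Fin m) S),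
      φ.mapMatrix (c • M) = φ c • φ.mapMatrix M := by
    intro c M
    ext i j
    simp [Matrix.smul_apply]
  have key := congrArg φ hgen
  rw [_root_.map_mul, map_pow, RingHom.map_det, RingHom.map_det, RingHom.map_det,
    map_sub, hsmul, _root_.map_mul, _root_.map_mul, RingHom.map_adjugate,
    h11, h12, h21, h22] at key
  rw [RingHom.map_det, h11] at key
  have hfb : φ.mapMatrix (fromBlocks B11 B12 B21 B22) = fromBlocks A11 A12 A21 A22 := by
    rw [show fromBlocks B11 B12 B21 B22 = B from fromBlocks_toBlocks B]
    exact hBmap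
  rw [hfb] at key
  exact key
end

section
/- Let R be a commutative ring, m ≥ 2, and let A be a 2m×2m matrix over R with m×m blocks A11, A12, A21, A22, and Δ := det(A11) • A22 − A21 · adj(A11) · A12. Then det(A11)^(m−2) • B22 = adj(Δ), where B22 denotes the bottom-right m×m block of the adjugate matrix adj(A). -/
open Matrix

variable {m : ℕ}

/-- Δ in terms of ⅟A11. -/
lemma delta_eq {α : Type*} [CommRing α] (A11 A12 A21 A22 : Matrix (Fin m) (Fin m) α)
    [Invertible A11] :
    A11.det • A22 - A21 * A11.adjugate * A12 =
      A11.det • (A22 - A21 * ⅟A11 * A12) := by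
  have hadj : A11.adjugate = A11.det • ⅟A11 := by
    calc A11.adjugate = A11.adjugate * (A11 * ⅟A11) := by rw [mul_invOf_self, mul_one]
    _ = (A11.adjugate * A11) * ⅟A11 := by rw [mul_assoc]
    _ = A11.det • ⅟A11 := by rw [adjugate_mul, smul_mul, one_mul]
  rw [hadj, smul_sub]
  congr 1
  rw [Matrix.mul_smul, Matrix.smul_mul]

lemma key {α : Type*} [CommRing α] (hm : 2 ≤ m) (A11 A12 A21 A22 : Matrix (Fin m) (Fin m) α)
    [Invertible A11] [hS : Invertible (A22 - A21 * ⅟A11 * A12)] :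
    A11.det ^ (m - 2) • (Matrix.fromBlocks A11 A12 A21 A22).adjugate.toBlocks₂₂ =
      (A11.det • A22 - A21 * A11.adjugate * A12).adjugate := by
  set S := A22 - A21 * ⅟A11 * A12 with hSdef
  haveI := fromBlocks₁₁Invertible A11 A12 A21 A22
  have hadjS : S.adjugate = S.det • ⅟S := by
    calc S.adjugate = S.adjugate * (S * ⅟S) := by rw [mul_invOf_self, mul_one]
    _ = (S.adjugate * S) * ⅟S := by rw [mul_assoc]
    _ = S.det • ⅟S := by rw [adjugate_mul, smul_mul, one_mul]
  have hadjA : (Matrix.fromBlocks A11 A12 A21 A22).adjugate =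
      (Matrix.fromBlocks A11 A12 A21 A22).det • ⅟(Matrix.fromBlocks A11 A12 A21 A22) := by
    calc (Matrix.fromBlocks A11 A12 A21 A22).adjugate
        = (Matrix.fromBlocks A11 A12 A21 A22).adjugate *
          ((Matrix.fromBlocks A11 A12 A21 A22) * ⅟(Matrix.fromBlocks A11 A12 A21 A22)) := by
          rw [mul_invOf_self, mul_one]
    _ = ((Matrix.fromBlocks A11 A12 A21 A22).adjugate * (Matrix.fromBlocks A11 A12 A21 A22)) *
          ⅟(Matrix.fromBlocks A11 A12 A21 A22) := by rw [mul_assoc]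
    _ = (Matrix.fromBlocks A11 A12 A21 A22).det • ⅟(Matrix.fromBlocks A11 A12 A21 A22) := by
          rw [adjugate_mul, smul_mul, one_mul]
  have hdetA : (Matrix.fromBlocks A11 A12 A21 A22).det = A11.det * S.det :=
    det_fromBlocks₁₁ A11 A12 A21 A22
  have hinv : (⅟(Matrix.fromBlocks A11 A12 A21 A22)).toBlocks₂₂ = ⅟S := by
    have h := congrArg Matrix.toBlocks₂₂ (invOf_fromBlocks₁₁_eq A11 A12 A21 A22)
    rw [toBlocks_fromBlocks₂₂] at h
    exact h
  have hblock : (Matrix.fromBlocks A11 A12 A21 A22).adjugate.toBlocks₂₂ =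
      (Matrix.fromBlocks A11 A12 A21 A22).det • ⅟S := by
    rw [hadjA, ← hinv]
    ext i j
    simp [toBlocks₂₂]
  rw [hblock, delta_eq, adjugate_smul, hadjS, hdetA]
  rw [smul_smul, smul_smul]
  congr 1
  have h1 : m - 1 = (m - 2) + 1 := by omega
  rw [Fintype.card_fin, h1, pow_succ]
  ring

lemma key_field {K : Type*} [Field K] (hm : 2 ≤ m) (A11 A12 A21 A22 : Matrix (Fin m) (Fin m) K)
    (h1 : A11.det ≠ 0) (h2 : (A11.det • A22 - A21 * A11.adjugate * A12).det ≠ 0) :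
    A11.det ^ (m - 2) • (Matrix.fromBlocks A11 A12 A21 A22).adjugate.toBlocks₂₂ =
      (A11.det • A22 - A21 * A11.adjugate * A12).adjugate := by
  haveI : Invertible A11 := invertibleOfIsUnitDet _ (isUnit_iff_ne_zero.2 h1)
  rw [delta_eq] at h2
  have hS : (A22 - A21 * ⅟A11 * A12).det ≠ 0 := by
    intro h
    rw [Matrix.det_smul, h, mul_zero] at h2
    exact h2 rfl
  haveI : Invertible (A22 - A21 * ⅟A11 * A12) :=
    invertibleOfIsUnitDet _ (isUnit_iff_ne_zero.2 hS)
  exact key hm A11 A12 A21 A22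


section Transfer

variable {α β : Type*} [CommRing α] [CommRing β]

lemma mapMatrix_smul (f : α →+* β) (c : α) {n : Type*} [Fintype n] [DecidableEq n]
    (M : Matrix n n α) :
    f.mapMatrix (c • M) = f c • f.mapMatrix M := by
  ext i j
  simp [RingHom.mapMatrix_apply, Matrix.map_apply, Matrix.smul_apply, smul_eq_mul]

lemma mapMatrix_toBlocks₂₂ (f : α →+* β) (M : Matrix (Fin m ⊕ Fin m) (Fin m ⊕ Fin m) α) :
    f.mapMatrix M.toBlocks₂₂ = (f.mapMatrix M).toBlocks₂₂ := rfl

lemma map_lhs (f : α →+* β) (A11 A12 A21 A22 : Matrix (Fin m) (Fin m) α) :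
    f.mapMatrix (A11.det ^ (m - 2) •
        (Matrix.fromBlocks A11 A12 A21 A22).adjugate.toBlocks₂₂) =
      (f.mapMatrix A11).det ^ (m - 2) •
        (Matrix.fromBlocks (f.mapMatrix A11) (f.mapMatrix A12) (f.mapMatrix A21)
          (f.mapMatrix A22)).adjugate.toBlocks₂₂ := by
  have hfb : f.mapMatrix (Matrix.fromBlocks A11 A12 A21 A22) =
      Matrix.fromBlocks (f.mapMatrix A11) (f.mapMatrix A12) (f.mapMatrix A21)
        (f.mapMatrix A22) := fromBlocks_map A11 A12 A21 A22 f
  rw [mapMatrix_smul, map_pow, RingHom.map_det, mapMatrix_toBlocks₂₂, RingHom.map_adjugate, hfb]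

lemma map_delta (f : α →+* β) (A11 A12 A21 A22 : Matrix (Fin m) (Fin m) α) :
    f.mapMatrix (A11.det • A22 - A21 * A11.adjugate * A12) =
      (f.mapMatrix A11).det • f.mapMatrix A22 -
        f.mapMatrix A21 * (f.mapMatrix A11).adjugate * f.mapMatrix A12 := by
  rw [map_sub, mapMatrix_smul, RingHom.map_det, _root_.map_mul, _root_.map_mul, RingHom.map_adjugate]

lemma map_rhs (f : α →+* β) (A11 A12 A21 A22 : Matrix (Fin m) (Fin m) α) :
    f.mapMatrix ((A11.det • A22 - A21 * A11.adjugate * A12).adjugate) =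
      ((f.mapMatrix A11).det • f.mapMatrix A22 -
        f.mapMatrix A21 * (f.mapMatrix A11).adjugate * f.mapMatrix A12).adjugate := by
  rw [RingHom.map_adjugate, map_delta]

end Transfer

section Generic

variable (m)

private noncomputable abbrev P := MvPolynomial ((Fin m ⊕ Fin m) × (Fin m ⊕ Fin m)) ℤ

private noncomputable def G : Matrix (Fin m ⊕ Fin m) (Fin m ⊕ Fin m) (P m) :=
  Matrix.mvPolynomialX (Fin m ⊕ Fin m) (Fin m ⊕ Fin m) ℤ

private noncomputable def e : P m →+* ℤ :=
  (MvPolynomial.eval fun v : (Fin m ⊕ Fin m) × (Fin m ⊕ Fin m) =>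
    if v.1 = v.2 then (1 : ℤ) else 0)

lemma e_mapMatrix_G : (e m).mapMatrix (G m) = 1 := by
  ext i j
  simp [e, G, RingHom.mapMatrix_apply, Matrix.map_apply, Matrix.mvPolynomialX,
    Matrix.one_apply]

lemma e_blocks₁₁ : (e m).mapMatrix (G m).toBlocks₁₁ = 1 := by
  have : (e m).mapMatrix (G m).toBlocks₁₁ = ((e m).mapMatrix (G m)).toBlocks₁₁ := rfl
  rw [this, e_mapMatrix_G, ← fromBlocks_one, toBlocks_fromBlocks₁₁]

lemma e_blocks₂₂ : (e m).mapMatrix (G m).toBlocks₂₂ = 1 := by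
  rw [mapMatrix_toBlocks₂₂, e_mapMatrix_G, ← fromBlocks_one, toBlocks_fromBlocks₂₂]

lemma e_blocks₁₂ : (e m).mapMatrix (G m).toBlocks₁₂ = 0 := by
  have : (e m).mapMatrix (G m).toBlocks₁₂ = ((e m).mapMatrix (G m)).toBlocks₁₂ := rfl
  rw [this, e_mapMatrix_G, ← fromBlocks_one, toBlocks_fromBlocks₁₂]

lemma e_blocks₂₁ : (e m).mapMatrix (G m).toBlocks₂₁ = 0 := by
  have : (e m).mapMatrix (G m).toBlocks₂₁ = ((e m).mapMatrix (G m)).toBlocks₂₁ := rfl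
  rw [this, e_mapMatrix_G, ← fromBlocks_one, toBlocks_fromBlocks₂₁]

lemma det_G11_ne_zero : (G m).toBlocks₁₁.det ≠ 0 := by
  intro h
  have := congrArg (e m) h
  rw [RingHom.map_det, e_blocks₁₁, det_one, map_zero] at this
  exact one_ne_zero this

lemma det_delta_ne_zero :
    ((G m).toBlocks₁₁.det • (G m).toBlocks₂₂ -
      (G m).toBlocks₂₁ * (G m).toBlocks₁₁.adjugate * (G m).toBlocks₁₂).det ≠ 0 := by
  intro h
  have := congrArg (e m) h
  rw [RingHom.map_det, map_sub, mapMatrix_smul, RingHom.map_det, _root_.map_mul, _root_.map_mul,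
    RingHom.map_adjugate, e_blocks₁₁, e_blocks₂₂, e_blocks₁₂, e_blocks₂₁, map_zero] at this
  simp at this

lemma key_generic (hm : 2 ≤ m) :
    (G m).toBlocks₁₁.det ^ (m - 2) •
      (Matrix.fromBlocks (G m).toBlocks₁₁ (G m).toBlocks₁₂ (G m).toBlocks₂₁
        (G m).toBlocks₂₂).adjugate.toBlocks₂₂ =
      ((G m).toBlocks₁₁.det • (G m).toBlocks₂₂ -
        (G m).toBlocks₂₁ * (G m).toBlocks₁₁.adjugate * (G m).toBlocks₁₂).adjugate := by
  set K := FractionRing (P m)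
  set f : P m →+* K := algebraMap (P m) K with hf
  have hfinj : Function.Injective f := IsFractionRing.injective (P m) K
  have hmain : f.mapMatrix ((G m).toBlocks₁₁.det ^ (m - 2) •
      (Matrix.fromBlocks (G m).toBlocks₁₁ (G m).toBlocks₁₂ (G m).toBlocks₂₁
        (G m).toBlocks₂₂).adjugate.toBlocks₂₂) =
      f.mapMatrix (((G m).toBlocks₁₁.det • (G m).toBlocks₂₂ -
        (G m).toBlocks₂₁ * (G m).toBlocks₁₁.adjugate * (G m).toBlocks₁₂).adjugate) := by
    rw [map_lhs, map_rhs]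
    apply key_field hm
    · rw [← RingHom.map_det]
      intro h
      exact det_G11_ne_zero m (hfinj (by rw [h, map_zero]))
    · rw [← map_delta, ← RingHom.map_det]
      intro h
      exact det_delta_ne_zero m (hfinj (by rw [h, map_zero]))
  exact Matrix.map_injective hfinj hmain

end Generic

/-- For a commutative ring `R`, `m ≥ 2`, and a `2m × 2m` matrix `A` over `R`
with `m × m` blocks `A11, A12, A21, A22`, letting
`Δ = det(A11) • A22 - A21 * adj(A11) * A12`, the bottom-right block `B22` of `adj(A)`
satisfies `det(A11) ^ (m - 2) • B22 = adj(Δ)`. -/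
theorem ffSchur_adjugate_block22 {R : Type*} [CommRing R] (m : ℕ) (hm : 2 ≤ m)
    (A11 A12 A21 A22 : Matrix (Fin m) (Fin m) R) :
    A11.det ^ (m - 2) • (Matrix.fromBlocks A11 A12 A21 A22).adjugate.toBlocks₂₂ =
      (A11.det • A22 - A21 * A11.adjugate * A12).adjugate := by
  classical
  set f : P m →+* R :=
    (MvPolynomial.eval₂Hom (Int.castRingHom R)
      (fun v : (Fin m ⊕ Fin m) × (Fin m ⊕ Fin m) =>
        Matrix.fromBlocks A11 A12 A21 A22 v.1 v.2)) with hfdef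
  have hG : f.mapMatrix (G m) = Matrix.fromBlocks A11 A12 A21 A22 := by
    ext i j
    simp [G, RingHom.mapMatrix_apply, Matrix.map_apply, Matrix.mvPolynomialX, hfdef]
  have h11 : f.mapMatrix (G m).toBlocks₁₁ = A11 := by
    have : f.mapMatrix (G m).toBlocks₁₁ = (f.mapMatrix (G m)).toBlocks₁₁ := rfl
    rw [this, hG, toBlocks_fromBlocks₁₁]
  have h12 : f.mapMatrix (G m).toBlocks₁₂ = A12 := by
    have : f.mapMatrix (G m).toBlocks₁₂ = (f.mapMatrix (G m)).toBlocks₁₂ := rfl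
    rw [this, hG, toBlocks_fromBlocks₁₂]
  have h21 : f.mapMatrix (G m).toBlocks₂₁ = A21 := by
    have : f.mapMatrix (G m).toBlocks₂₁ = (f.mapMatrix (G m)).toBlocks₂₁ := rfl
    rw [this, hG, toBlocks_fromBlocks₂₁]
  have h22 : f.mapMatrix (G m).toBlocks₂₂ = A22 := by
    rw [mapMatrix_toBlocks₂₂, hG, toBlocks_fromBlocks₂₂]
  have h := congrArg (fun M => f.mapMatrix M) (key_generic m hm)
  rw [map_lhs, map_rhs, h11, h12, h21, h22] at h
  exact h
end

section
/- Let R be a commutative ring, m ≥ 1, and let A be a 2m×2m matrix over R with m×m blocks A11, A12, A21, A22, and Δ := det(A11) • A22 − A21 · adj(A11) · A12. Then det(A11)^m • B11 = det(Δ) • adj(A11) + adj(A11) · A12 · adj(Δ) · A21 · adj(A11), where B11 denotes the top-left m×m block of the adjugate matrix adj(A). -/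
open Matrix

namespace FFSchur

variable {α β : Type*} [CommRing α] [CommRing β]

lemma adj_of_invertible {n : Type*} [Fintype n] [DecidableEq n]
    (M : Matrix n n α) [Invertible M] : M.adjugate = M.det • ⅟M := by
  calc M.adjugate = ⅟M * (M * M.adjugate) := by rw [← mul_assoc, invOf_mul_self, one_mul]
    _ = M.det • ⅟M := by rw [mul_adjugate, Matrix.mul_smul, mul_one]

noncomputable def Lhs (k : ℕ) (A B C D : Matrix (Fin (k+1)) (Fin (k+1)) α) :
    Matrix (Fin (k+1)) (Fin (k+1)) α :=
  A.det ^ (k+1) • (fromBlocks A B C D).adjugate.toBlocks₁₁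

noncomputable def Rhs (k : ℕ) (A B C D : Matrix (Fin (k+1)) (Fin (k+1)) α) :
    Matrix (Fin (k+1)) (Fin (k+1)) α :=
  (A.det • D - C * A.adjugate * B).det • A.adjugate +
    A.adjugate * B * (A.det • D - C * A.adjugate * B).adjugate * C * A.adjugate

lemma aux (k : ℕ) (A B C D : Matrix (Fin (k+1)) (Fin (k+1)) α)
    [Invertible A] [Invertible (D - C * ⅟A * B)] :
    Lhs k A B C D = Rhs k A B C D := by
  set S := D - C * ⅟A * B with hS
  have hadjA : A.adjugate = A.det • ⅟A := adj_of_invertible A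
  have hΔ : A.det • D - C * A.adjugate * B = A.det • S := by
    rw [hadjA, hS, smul_sub]
    congr 1
    rw [Matrix.mul_smul, Matrix.smul_mul]
  letI := fromBlocks₁₁Invertible A B C D
  have hdetS : (A.det • S).det = A.det ^ (k+1) * S.det := by
    rw [det_smul, Fintype.card_fin]
  have hadjS : (A.det • S).adjugate = A.det ^ k • S.adjugate := by
    rw [adjugate_smul, Fintype.card_fin, Nat.add_sub_cancel]
  have hadjΔ' : S.adjugate = S.det • ⅟S := adj_of_invertible S
  have hdetF : (fromBlocks A B C D).det = A.det * S.det := det_fromBlocks₁₁ A B C D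
  have hadjF : (fromBlocks A B C D).adjugate
      = (A.det * S.det) • ⅟(fromBlocks A B C D) := by
    rw [adj_of_invertible, hdetF]
  have hinv : ⅟(fromBlocks A B C D) =
      fromBlocks (⅟A + ⅟A * B * ⅟S * C * ⅟A) (-(⅟A * B * ⅟S))
        (-(⅟S * C * ⅟A)) (⅟S) := invOf_fromBlocks₁₁_eq A B C D
  have htb : ((A.det * S.det) • ⅟(fromBlocks A B C D)).toBlocks₁₁
      = (A.det * S.det) • (⅟A + ⅟A * B * ⅟S * C * ⅟A) := by
    rw [hinv]
    ext i j
    simp [toBlocks₁₁]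
  rw [Lhs, Rhs, hΔ, hadjF, htb, hdetS, hadjS, hadjΔ', hadjA]
  simp only [smul_smul, smul_add, Matrix.smul_mul, Matrix.mul_smul]
  match_scalars <;> ring

end FFSchur

namespace FFSchur

variable {α β : Type*} [CommRing α] [CommRing β]

lemma mapMatrix_smul {n : Type*} [Fintype n] [DecidableEq n] (f : α →+* β) (r : α)
    (M : Matrix n n α) : f.mapMatrix (r • M) = f r • f.mapMatrix M := by
  rw [RingHom.mapMatrix_apply, RingHom.mapMatrix_apply]
  ext i j
  simp [Matrix.map_apply, Matrix.smul_apply, _root_.map_mul]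

lemma toBlocks₁₁_map {n o l p : Type*} (f : α →+* β) (M : Matrix (n ⊕ o) (l ⊕ p) α) :
    (M.map f).toBlocks₁₁ = M.toBlocks₁₁.map f := rfl

lemma lhs_map (k : ℕ) (f : α →+* β) (A B C D : Matrix (Fin (k+1)) (Fin (k+1)) α) :
    f.mapMatrix (Lhs k A B C D) = Lhs k (f.mapMatrix A) (f.mapMatrix B) (f.mapMatrix C)
      (f.mapMatrix D) := by
  rw [Lhs, Lhs, mapMatrix_smul, map_pow, RingHom.map_det]
  congr 1
  rw [RingHom.mapMatrix_apply, RingHom.mapMatrix_apply, ← toBlocks₁₁_map,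
    ← RingHom.mapMatrix_apply, RingHom.map_adjugate]
  rw [RingHom.mapMatrix_apply, fromBlocks_map]
  rfl

lemma rhs_map (k : ℕ) (f : α →+* β) (A B C D : Matrix (Fin (k+1)) (Fin (k+1)) α) :
    f.mapMatrix (Rhs k A B C D) = Rhs k (f.mapMatrix A) (f.mapMatrix B) (f.mapMatrix C)
      (f.mapMatrix D) := by
  have hΔ : f.mapMatrix (A.det • D - C * A.adjugate * B) =
      (f.mapMatrix A).det • f.mapMatrix D -
        f.mapMatrix C * (f.mapMatrix A).adjugate * f.mapMatrix B := by
    rw [map_sub, mapMatrix_smul, RingHom.map_det, _root_.map_mul, _root_.map_mul, RingHom.map_adjugate]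
  rw [Rhs, Rhs, map_add, mapMatrix_smul, RingHom.map_det, hΔ, _root_.map_mul, _root_.map_mul, _root_.map_mul,
    _root_.map_mul, RingHom.map_adjugate, RingHom.map_adjugate, hΔ]

end FFSchur

namespace FFSchur

open MvPolynomial in
lemma generic (k : ℕ) {α : Type*} [CommRing α]
    (A B C D : Matrix (Fin (k+1)) (Fin (k+1)) α) :
    Lhs k A B C D = Rhs k A B C D := by
  classical
  set ι := (Fin (k+1) ⊕ Fin (k+1)) × (Fin (k+1) ⊕ Fin (k+1))
  set R₀ := MvPolynomial ι ℤ
  set K := FractionRing R₀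
  set g : R₀ →+* K := algebraMap R₀ K with hgdef
  have hg : Function.Injective g := IsFractionRing.injective R₀ K
  set A₀ : Matrix (Fin (k+1)) (Fin (k+1)) R₀ :=
    Matrix.of fun i j => (X (Sum.inl i, Sum.inl j) : R₀) with hA₀
  set B₀ : Matrix (Fin (k+1)) (Fin (k+1)) R₀ :=
    Matrix.of fun i j => (X (Sum.inl i, Sum.inr j) : R₀) with hB₀
  set C₀ : Matrix (Fin (k+1)) (Fin (k+1)) R₀ :=
    Matrix.of fun i j => (X (Sum.inr i, Sum.inl j) : R₀) with hC₀
  set D₀ : Matrix (Fin (k+1)) (Fin (k+1)) R₀ :=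
    Matrix.of fun i j => (X (Sum.inr i, Sum.inr j) : R₀) with hD₀
  set e : R₀ →+* ℤ := (MvPolynomial.eval fun p : ι => if p.1 = p.2 then (1:ℤ) else 0)
  have hdetA₀ : A₀.det ≠ 0 := by
    intro h
    have h1 : e A₀.det = 1 := by
      rw [RingHom.map_det]
      have : e.mapMatrix A₀ = 1 := by
        ext i j
        by_cases hij : i = j <;>
          simp (config := { zetaDelta := true }) [RingHom.mapMatrix_apply, Matrix.map_apply, hA₀, Matrix.one_apply, e,
            MvPolynomial.eval_X, hij]
      rw [this, det_one]
    rw [h, map_zero] at h1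
    exact zero_ne_one h1
  have hdetM : (fromBlocks A₀ B₀ C₀ D₀).det ≠ 0 := by
    intro h
    have h1 : e (fromBlocks A₀ B₀ C₀ D₀).det = 1 := by
      rw [RingHom.map_det]
      have : e.mapMatrix (fromBlocks A₀ B₀ C₀ D₀) = 1 := by
        ext i j
        rcases i with i | i <;> rcases j with j | j <;> by_cases hij : i = j <;>
          simp (config := { zetaDelta := true }) [RingHom.mapMatrix_apply, Matrix.map_apply, Matrix.fromBlocks_apply₁₁,
            Matrix.fromBlocks_apply₁₂, Matrix.fromBlocks_apply₂₁, Matrix.fromBlocks_apply₂₂,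
            hA₀, hB₀, hC₀, hD₀, Matrix.one_apply, e, MvPolynomial.eval_X, hij]
      rw [this, det_one]
    rw [h, map_zero] at h1
    exact zero_ne_one h1
  -- move to the fraction field
  have hKA : (g.mapMatrix A₀).det ≠ 0 := by
    rw [← RingHom.map_det]
    exact fun h => hdetA₀ (hg (by rwa [map_zero]))
  letI : Invertible (g.mapMatrix A₀) := (g.mapMatrix A₀).invertibleOfIsUnitDet hKA.isUnit
  have hKM : (fromBlocks (g.mapMatrix A₀) (g.mapMatrix B₀) (g.mapMatrix C₀)
      (g.mapMatrix D₀)).det ≠ 0 := by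
    have : fromBlocks (g.mapMatrix A₀) (g.mapMatrix B₀) (g.mapMatrix C₀) (g.mapMatrix D₀)
        = g.mapMatrix (fromBlocks A₀ B₀ C₀ D₀) := by
      simp (config := { zetaDelta := true }) [RingHom.mapMatrix_apply, fromBlocks_map]
    rw [this, ← RingHom.map_det]
    exact fun h => hdetM (hg (by rwa [map_zero]))
  have hKS : (g.mapMatrix D₀ - g.mapMatrix C₀ * ⅟(g.mapMatrix A₀) * g.mapMatrix B₀).det ≠ 0 := by
    intro h
    rw [det_fromBlocks₁₁, h, mul_zero] at hKM
    exact hKM rfl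
  letI : Invertible (g.mapMatrix D₀ - g.mapMatrix C₀ * ⅟(g.mapMatrix A₀) * g.mapMatrix B₀) :=
    Matrix.invertibleOfIsUnitDet _ hKS.isUnit
  have hK := aux k (g.mapMatrix A₀) (g.mapMatrix B₀) (g.mapMatrix C₀) (g.mapMatrix D₀)
  rw [← lhs_map, ← rhs_map] at hK
  have h₀ : Lhs k A₀ B₀ C₀ D₀ = Rhs k A₀ B₀ C₀ D₀ := by
    have hinj : Function.Injective
        fun M : Matrix (Fin (k+1)) (Fin (k+1)) R₀ => M.map (g : R₀ → K) :=
      Matrix.map_injective hg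
    apply hinj
    simpa only [RingHom.mapMatrix_apply] using hK
  -- specialize to α via evaluation
  set φ : R₀ →+* α :=
    (MvPolynomial.eval₂Hom (Int.castRingHom α)
      fun p : ι => fromBlocks A B C D p.1 p.2) with hφ
  have hA : φ.mapMatrix A₀ = A := by
    ext i j
    simp (config := { zetaDelta := true }) [RingHom.mapMatrix_apply, Matrix.map_apply, hA₀, hφ, MvPolynomial.eval₂Hom_X',
      Matrix.fromBlocks_apply₁₁]
  have hB : φ.mapMatrix B₀ = B := by
    ext i j
    simp (config := { zetaDelta := true }) [RingHom.mapMatrix_apply, Matrix.map_apply, hB₀, hφ, MvPolynomial.eval₂Hom_X',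
      Matrix.fromBlocks_apply₁₂]
  have hC : φ.mapMatrix C₀ = C := by
    ext i j
    simp (config := { zetaDelta := true }) [RingHom.mapMatrix_apply, Matrix.map_apply, hC₀, hφ, MvPolynomial.eval₂Hom_X',
      Matrix.fromBlocks_apply₂₁]
  have hD : φ.mapMatrix D₀ = D := by
    ext i j
    simp (config := { zetaDelta := true }) [RingHom.mapMatrix_apply, Matrix.map_apply, hD₀, hφ, MvPolynomial.eval₂Hom_X',
      Matrix.fromBlocks_apply₂₂]
  calc Lhs k A B C D = φ.mapMatrix (Lhs k A₀ B₀ C₀ D₀) := by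
        rw [lhs_map, hA, hB, hC, hD]
    _ = φ.mapMatrix (Rhs k A₀ B₀ C₀ D₀) := by rw [h₀]
    _ = Rhs k A B C D := by rw [rhs_map, hA, hB, hC, hD]

end FFSchur

/-- For a commutative ring `R`, `m ≥ 1`, and a `2m × 2m` matrix `A` over `R`
with `m × m` blocks `A11, A12, A21, A22`, letting
`Δ = det(A11) • A22 - A21 * adj(A11) * A12`, the top-left block `B11` of `adj(A)`
satisfies `det(A11) ^ m • B11 = det(Δ) • adj(A11) + adj(A11) * A12 * adj(Δ) * A21 * adj(A11)`. -/
theorem ffSchur_adjugate_block11 {R : Type*} [CommRing R] (m : ℕ) (hm : 1 ≤ m)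
    (A11 A12 A21 A22 : Matrix (Fin m) (Fin m) R) :
    A11.det ^ m • (Matrix.fromBlocks A11 A12 A21 A22).adjugate.toBlocks₁₁ =
      (A11.det • A22 - A21 * A11.adjugate * A12).det • A11.adjugate +
        A11.adjugate * A12 * (A11.det • A22 - A21 * A11.adjugate * A12).adjugate * A21 *
          A11.adjugate := by
  obtain ⟨k, rfl⟩ : ∃ k, m = k + 1 := ⟨m - 1, (Nat.succ_pred_eq_of_pos hm).symm⟩
  exact FFSchur.generic k A11 A12 A21 A22
end

section
/- Let R be a commutative ring, σ a type, m ≥ 1 and d natural numbers, and let A be a 2m×2m matrix over MvPolynomial σ R such that every entry of A has total degree at most d. Then every entry of the fraction-free Schur complement Δ(A) := det(A11) • A22 − A21 · adj(A11) · A12 has total degree at most (m+1)·d. -/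
open MvPolynomial Finset

private lemma tD_det_le {R : Type*} [CommRing R] {σ : Type*} {m : ℕ}
    (M : Matrix (Fin m) (Fin m) (MvPolynomial σ R)) (g : Fin m → ℕ)
    (h : ∀ i j, (M i j).totalDegree ≤ g i) :
    M.det.totalDegree ≤ ∑ i, g i := by
  rw [Matrix.det_apply]
  refine (MvPolynomial.totalDegree_finset_sum _ _).trans ?_
  apply Finset.sup_le
  intro π _
  have h1 : (Equiv.Perm.sign π • ∏ i, M (π i) i).totalDegree
      = (∏ i, M (π i) i).totalDegree := by
    rcases Int.units_eq_one_or (Equiv.Perm.sign π) with h | h <;> simp [h]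
  rw [h1]
  refine (MvPolynomial.totalDegree_finset_prod _ _).trans ?_
  calc ∑ i, (M (π i) i).totalDegree ≤ ∑ i, g (π i) :=
        Finset.sum_le_sum fun i _ => h (π i) i
    _ = ∑ i, g i := Equiv.sum_comp π g

/-- If every entry of a `2m × 2m` matrix (`m ≥ 1`) over a multivariate
polynomial ring, given by `m × m` blocks `A11, A12, A21, A22`, has total degree at most `d`,
then every entry of the fraction-free Schur complement
`Δ = det(A11) • A22 - A21 * adj(A11) * A12` has total degree at most `(m + 1) * d`. -/
theorem totalDegree_ffSchur_le {R : Type*} [CommRing R] {σ : Type*} (m d : ℕ) (hm : 1 ≤ m)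
    (A11 A12 A21 A22 : Matrix (Fin m) (Fin m) (MvPolynomial σ R))
    (hA : ∀ i j, ((Matrix.fromBlocks A11 A12 A21 A22) i j).totalDegree ≤ d) :
    ∀ i j, ((A11.det • A22 - A21 * A11.adjugate * A12) i j).totalDegree ≤ (m + 1) * d := by
  classical
  have h11 : ∀ i j, (A11 i j).totalDegree ≤ d := fun i j => by
    simpa using hA ((Sum.inl i)) ((Sum.inl j))
  have h12 : ∀ i j, (A12 i j).totalDegree ≤ d := fun i j => by
    simpa using hA ((Sum.inl i)) ((Sum.inr j))
  have h21 : ∀ i j, (A21 i j).totalDegree ≤ d := fun i j => by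
    simpa using hA ((Sum.inr i)) ((Sum.inl j))
  have h22 : ∀ i j, (A22 i j).totalDegree ≤ d := fun i j => by
    simpa using hA ((Sum.inr i)) ((Sum.inr j))
  have hdet : A11.det.totalDegree ≤ m * d := by
    simpa using tD_det_le A11 (fun _ => d) h11
  have hadj : ∀ k l, (A11.adjugate k l).totalDegree ≤ (m - 1) * d := by
    intro k l
    rw [Matrix.adjugate_apply]
    have hb := tD_det_le (A11.updateRow l (Pi.single k 1))
      (fun i => if i = l then 0 else d) (fun i j => by
        by_cases hi : i = l
        · subst hi
          simp only [Matrix.updateRow_self, if_pos rfl]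
          rcases eq_or_ne j k with rfl | hj
          · simp [Pi.single_apply]
          · simp [Pi.single_apply, hj.symm]
        · simp only [Matrix.updateRow_ne hi, if_neg hi]
          exact h11 i j)
    refine hb.trans (le_of_eq ?_)
    have hs := Finset.sum_erase_add Finset.univ
      (fun i => if i = l then (0:ℕ) else d) (Finset.mem_univ l)
    rw [← hs]
    simp only [if_pos rfl, add_zero, if_true]
    rw [Finset.sum_congr rfl (fun i hi => if_neg (Finset.ne_of_mem_erase hi)),
      Finset.sum_const, smul_eq_mul, Finset.card_erase_of_mem (Finset.mem_univ l),
      Finset.card_univ, Fintype.card_fin]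
  intro i j
  have hkey : (m - 1) * d + d + d = (m + 1) * d := by
    have : m - 1 + 1 + 1 = m + 1 := by omega
    rw [← this]; ring
  have hABC : ((A21 * A11.adjugate * A12) i j).totalDegree ≤ (m + 1) * d := by
    have : (A21 * A11.adjugate * A12) i j
        = ∑ l, (∑ k, A21 i k * A11.adjugate k l) * A12 l j := by
      simp [Matrix.mul_apply]
    rw [this]
    refine (MvPolynomial.totalDegree_finset_sum _ _).trans (Finset.sup_le fun l _ => ?_)
    refine (MvPolynomial.totalDegree_mul _ _).trans ?_
    have h1 : (∑ k, A21 i k * A11.adjugate k l).totalDegree ≤ d + (m - 1) * d := by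
      refine (MvPolynomial.totalDegree_finset_sum _ _).trans (Finset.sup_le fun k _ => ?_)
      exact (MvPolynomial.totalDegree_mul _ _).trans (add_le_add (h21 i k) (hadj k l))
    calc (∑ k, A21 i k * A11.adjugate k l).totalDegree + (A12 l j).totalDegree
        ≤ (d + (m - 1) * d) + d := add_le_add h1 (h12 l j)
      _ = (m + 1) * d := by omega
  have hS : ((A11.det • A22) i j).totalDegree ≤ (m + 1) * d := by
    have : (A11.det • A22) i j = A11.det * A22 i j := rfl
    rw [this]
    refine (MvPolynomial.totalDegree_mul _ _).trans ?_
    calc A11.det.totalDegree + (A22 i j).totalDegree ≤ m * d + d :=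
      add_le_add hdet (h22 i j)
      _ ≤ (m + 1) * d := by ring_nf; omega
  have : (A11.det • A22 - A21 * A11.adjugate * A12) i j
      = (A11.det • A22) i j - (A21 * A11.adjugate * A12) i j := rfl
  rw [this, sub_eq_add_neg]
  refine (MvPolynomial.totalDegree_add _ _).trans (max_le hS ?_)
  rw [MvPolynomial.totalDegree_neg]
  exact hABC
end

section
/- Let R be a commutative ring, σ a type, m ≥ 2 and d natural numbers, and let A be a 2m×2m matrix over MvPolynomial σ R such that every entry of A has total degree at most d. Let Δ := det(A11) • A22 − A21 · adj(A11) · A12. Then there exists an m×m matrix Q over MvPolynomial σ R such that adj(Δ) = det(A11)^(m−2) • Q and every entry of Q has total degree at most (2m−1)·d. -/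
open Matrix

theorem ffSchur_adj_eq_det_smul_inv {F : Type*} [Field F] {n : Type*} [Fintype n] [DecidableEq n]
    (N : Matrix n n F) (hN : IsUnit N.det) : N.adjugate = N.det • N⁻¹ := by
  rw [Matrix.inv_def, smul_smul, Ring.mul_inverse_cancel _ hN, one_smul]

theorem ffSchur_field_key {F : Type*} [Field F] (m : ℕ) (hm : 2 ≤ m)
    (B11 B12 B21 B22 : Matrix (Fin m) (Fin m) F)
    (h1 : B11.det ≠ 0) (hM : (fromBlocks B11 B12 B21 B22).det ≠ 0) :
    (B11.det • B22 - B21 * B11.adjugate * B12).adjugate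
      = B11.det ^ (m - 2) • (fromBlocks B11 B12 B21 B22).adjugate.toBlocks₂₂ := by
  have hu1 : IsUnit B11.det := isUnit_iff_ne_zero.mpr h1
  have huM : IsUnit (fromBlocks B11 B12 B21 B22).det := isUnit_iff_ne_zero.mpr hM
  haveI := B11.invertibleOfIsUnitDet hu1
  set S := B22 - B21 * B11⁻¹ * B12 with hS
  have hdetM : (fromBlocks B11 B12 B21 B22).det = B11.det * S.det := by
    rw [det_fromBlocks₁₁]
    congr 3
    rw [invOf_eq_nonsing_inv]
  have hSdet : S.det ≠ 0 := fun h => hM (by rw [hdetM, h, mul_zero])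
  have huS : IsUnit S.det := isUnit_iff_ne_zero.mpr hSdet
  have hΔ : B11.det • B22 - B21 * B11.adjugate * B12 = B11.det • S := by
    rw [ffSchur_adj_eq_det_smul_inv _ hu1, Matrix.mul_smul, Matrix.smul_mul, hS, smul_sub]
  have hMinv : (fromBlocks B11 B12 B21 B22)⁻¹ =
      fromBlocks (B11⁻¹ + B11⁻¹ * B12 * S⁻¹ * B21 * B11⁻¹) (-(B11⁻¹ * B12 * S⁻¹))
        (-(S⁻¹ * B21 * B11⁻¹)) S⁻¹ := by
    apply inv_eq_right_inv
    rw [fromBlocks_multiply, ← fromBlocks_one]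
    have e11 : B11 * (B11⁻¹ + B11⁻¹ * B12 * S⁻¹ * B21 * B11⁻¹) + B12 * -(S⁻¹ * B21 * B11⁻¹)
        = 1 := by
      simp only [Matrix.mul_add, Matrix.mul_neg, Matrix.mul_assoc,
        Matrix.mul_nonsing_inv_cancel_left _ _ hu1, Matrix.mul_nonsing_inv _ hu1]
      abel
    have e12 : B11 * -(B11⁻¹ * B12 * S⁻¹) + B12 * S⁻¹ = 0 := by
      simp only [Matrix.mul_neg, Matrix.mul_assoc,
        Matrix.mul_nonsing_inv_cancel_left _ _ hu1]
      abel
    have e21 : B21 * (B11⁻¹ + B11⁻¹ * B12 * S⁻¹ * B21 * B11⁻¹) + B22 * -(S⁻¹ * B21 * B11⁻¹)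
        = 0 := by
      have : B22 * (S⁻¹ * (B21 * B11⁻¹)) - B21 * (B11⁻¹ * (B12 * (S⁻¹ * (B21 * B11⁻¹))))
          = (B22 - B21 * B11⁻¹ * B12) * (S⁻¹ * (B21 * B11⁻¹)) := by
        simp only [Matrix.sub_mul, Matrix.mul_assoc]
      simp only [Matrix.mul_add, Matrix.mul_neg, Matrix.mul_assoc]
      rw [add_neg_eq_zero, ← eq_sub_iff_add_eq, this, ← hS,
        Matrix.mul_nonsing_inv_cancel_left _ _ huS]
    have e22 : B21 * -(B11⁻¹ * B12 * S⁻¹) + B22 * S⁻¹ = 1 := by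
      have : B22 * S⁻¹ - B21 * (B11⁻¹ * (B12 * S⁻¹)) = (B22 - B21 * B11⁻¹ * B12) * S⁻¹ := by
        simp only [Matrix.sub_mul, Matrix.mul_assoc]
      rw [Matrix.mul_neg, neg_add_eq_sub, Matrix.mul_assoc, this, ← hS,
        Matrix.mul_nonsing_inv _ huS]
    rw [e11, e12, e21, e22]
  have htb : (fromBlocks B11 B12 B21 B22).adjugate.toBlocks₂₂
      = (fromBlocks B11 B12 B21 B22).det • S⁻¹ := by
    rw [ffSchur_adj_eq_det_smul_inv _ huM, hMinv]
    ext i j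
    rfl
  rw [hΔ, Matrix.adjugate_smul, ffSchur_adj_eq_det_smul_inv _ huS, htb, hdetM,
    Fintype.card_fin, smul_smul, smul_smul]
  congr 1
  rw [← mul_assoc, ← pow_succ]
  congr 2
  omega


section MapLemmas

variable {β γ : Type*} [CommRing β] [CommRing γ] (f : β →+* γ)

theorem ffSchur_adjugate_map {n : Type*} [Fintype n] [DecidableEq n] (N : Matrix n n β) :
    (N.adjugate).map f = (N.map f).adjugate := by
  rw [← RingHom.mapMatrix_apply, RingHom.map_adjugate, RingHom.mapMatrix_apply]

theorem ffSchur_smul_map {n : Type*} (c : β) (N : Matrix n n β) :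
    (c • N).map f = f c • N.map f := by
  ext i j
  simp [smul_eq_mul]

theorem ffSchur_lhs_map {m : ℕ} (B11 B12 B21 B22 : Matrix (Fin m) (Fin m) β) :
    ((B11.det • B22 - B21 * B11.adjugate * B12).adjugate).map f
      = ((B11.map f).det • B22.map f
          - B21.map f * (B11.map f).adjugate * B12.map f).adjugate := by
  rw [ffSchur_adjugate_map]
  rw [Matrix.map_sub _ (map_sub f), Matrix.map_mul, Matrix.map_mul, ffSchur_smul_map,
    RingHom.map_det, ffSchur_adjugate_map, RingHom.mapMatrix_apply]

theorem ffSchur_toBlocks₂₂_map {l o l' o' : Type*} (N : Matrix (l ⊕ o) (l' ⊕ o') β) :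
    (N.toBlocks₂₂).map f = (N.map f).toBlocks₂₂ := rfl

theorem ffSchur_toBlocksXX_map₁₁ {l o l' o' : Type*} (N : Matrix (l ⊕ o) (l' ⊕ o') β) :
    (N.toBlocks₁₁).map f = (N.map f).toBlocks₁₁ := rfl

theorem ffSchur_toBlocksXX_map₁₂ {l o l' o' : Type*} (N : Matrix (l ⊕ o) (l' ⊕ o') β) :
    (N.toBlocks₁₂).map f = (N.map f).toBlocks₁₂ := rfl

theorem ffSchur_toBlocksXX_map₂₁ {l o l' o' : Type*} (N : Matrix (l ⊕ o) (l' ⊕ o') β) :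
    (N.toBlocks₂₁).map f = (N.map f).toBlocks₂₁ := rfl

theorem ffSchur_toBlocksXX_map₂₂ {l o l' o' : Type*} (N : Matrix (l ⊕ o) (l' ⊕ o') β) :
    (N.toBlocks₂₂).map f = (N.map f).toBlocks₂₂ := rfl

theorem ffSchur_rhs_map {m : ℕ} (k : ℕ) (B11 B12 B21 B22 : Matrix (Fin m) (Fin m) β) :
    (B11.det ^ k • (fromBlocks B11 B12 B21 B22).adjugate.toBlocks₂₂).map f
      = (B11.map f).det ^ k •
        (fromBlocks (B11.map f) (B12.map f) (B21.map f) (B22.map f)).adjugate.toBlocks₂₂ := by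
  rw [← fromBlocks_map, ffSchur_smul_map, map_pow, RingHom.map_det, ffSchur_toBlocks₂₂_map,
    ffSchur_adjugate_map, RingHom.mapMatrix_apply]

end MapLemmas

theorem ffSchur_key {α : Type*} [CommRing α] (m : ℕ) (hm : 2 ≤ m)
    (B11 B12 B21 B22 : Matrix (Fin m) (Fin m) α) :
    (B11.det • B22 - B21 * B11.adjugate * B12).adjugate
      = B11.det ^ (m - 2) • (fromBlocks B11 B12 B21 B22).adjugate.toBlocks₂₂ := by
  classical
  set n := (Fin m ⊕ Fin m)
  set P := MvPolynomial (n × n) ℤ with hP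
  set G : Matrix n n P := mvPolynomialX n n ℤ with hGdef
  -- Step 1: the generic identity over `P`, proved in the fraction field of `P`.
  have hgen : ((G.toBlocks₁₁.det • G.toBlocks₂₂
        - G.toBlocks₂₁ * G.toBlocks₁₁.adjugate * G.toBlocks₁₂).adjugate : Matrix _ _ P)
      = G.toBlocks₁₁.det ^ (m - 2) •
        (fromBlocks G.toBlocks₁₁ G.toBlocks₁₂ G.toBlocks₂₁ G.toBlocks₂₂).adjugate.toBlocks₂₂ := by
    have hfb : fromBlocks G.toBlocks₁₁ G.toBlocks₁₂ G.toBlocks₂₁ G.toBlocks₂₂ = G :=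
      fromBlocks_toBlocks G
    letI F := FractionRing P
    set φ : P →+* F := algebraMap P F with hφdef
    have hφ : Function.Injective φ := IsFractionRing.injective P F
    -- nonvanishing of the two determinants
    have h1 : (G.toBlocks₁₁).det ≠ 0 := by
      set e : Fin m × Fin m → n × n :=
        fun p => ((Sum.inl p.1 : n), (Sum.inl p.2 : n)) with he
      have hee : Function.Injective e := by
        intro a b hab
        simp only [he, Prod.mk.injEq, Sum.inl.injEq] at hab
        exact Prod.ext (Sum.inl.inj hab.1) (Sum.inl.inj hab.2)
      have hrn : Function.Injective (MvPolynomial.rename (R := ℤ) e) :=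
        MvPolynomial.rename_injective e hee
      have hblock : G.toBlocks₁₁
          = (mvPolynomialX (Fin m) (Fin m) ℤ).map (MvPolynomial.rename (R := ℤ) e) := by
        ext i j
        simp [hGdef, toBlocks₁₁, mvPolynomialX_apply, he]
      intro h0
      apply det_mvPolynomialX_ne_zero (Fin m) ℤ
      apply hrn
      rw [map_zero]
      have hdd := AlgHom.map_det (MvPolynomial.rename (R := ℤ) e)
        (mvPolynomialX (Fin m) (Fin m) ℤ)
      rw [AlgHom.mapMatrix_apply] at hdd
      rw [hdd, ← hblock, h0]
    have hGdet : G.det ≠ 0 := det_mvPolynomialX_ne_zero n ℤ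
    -- transfer determinant hypotheses to `F`
    have hdet_map : ∀ N : Matrix (Fin m) (Fin m) P, (N.map φ).det = φ N.det := by
      intro N
      rw [RingHom.map_det, RingHom.mapMatrix_apply]
    have h1F : ((G.toBlocks₁₁).map φ).det ≠ 0 := by
      rw [hdet_map]
      exact fun h => h1 (hφ (by rw [h, map_zero]))
    have hMF : (fromBlocks ((G.toBlocks₁₁).map φ) ((G.toBlocks₁₂).map φ)
        ((G.toBlocks₂₁).map φ) ((G.toBlocks₂₂).map φ)).det ≠ 0 := by
      rw [← fromBlocks_map, hfb]
      have : (G.map ⇑φ).det = φ G.det := by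
        rw [RingHom.map_det, RingHom.mapMatrix_apply]
      rw [this]
      exact fun h => hGdet (hφ (by rw [h, map_zero]))
    have key := ffSchur_field_key m hm ((G.toBlocks₁₁).map φ) ((G.toBlocks₁₂).map φ)
      ((G.toBlocks₂₁).map φ) ((G.toBlocks₂₂).map φ) h1F hMF
    rw [← ffSchur_lhs_map, ← ffSchur_rhs_map] at key
    refine Matrix.ext fun i j => hφ ?_
    have h' := congrFun (congrFun key i) j
    simpa [Matrix.map_apply, Matrix.smul_apply, smul_eq_mul, _root_.map_mul, map_pow] using h'
  -- Step 2: push the generic identity down to `α` along `aeval`.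
  set M : Matrix n n α := fromBlocks B11 B12 B21 B22 with hM
  set ψ : P →+* α := (MvPolynomial.aeval fun p : n × n => M p.1 p.2 : P →ₐ[ℤ] α).toRingHom
    with hψ
  have hGmap : G.map ψ = M := by
    have := mvPolynomialX_mapMatrix_aeval (S := α) ℤ M
    rwa [AlgHom.mapMatrix_apply] at this
  have e11 : (G.toBlocks₁₁).map ψ = B11 := by
    rw [ffSchur_toBlocksXX_map₁₁ ψ G, hGmap, hM, toBlocks_fromBlocks₁₁]
  have e12 : (G.toBlocks₁₂).map ψ = B12 := by
    rw [ffSchur_toBlocksXX_map₁₂ ψ G, hGmap, hM, toBlocks_fromBlocks₁₂]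
  have e21 : (G.toBlocks₂₁).map ψ = B21 := by
    rw [ffSchur_toBlocksXX_map₂₁ ψ G, hGmap, hM, toBlocks_fromBlocks₂₁]
  have e22 : (G.toBlocks₂₂).map ψ = B22 := by
    rw [ffSchur_toBlocksXX_map₂₂ ψ G, hGmap, hM, toBlocks_fromBlocks₂₂]
  calc (B11.det • B22 - B21 * B11.adjugate * B12).adjugate
      = (((G.toBlocks₁₁.det • G.toBlocks₂₂
            - G.toBlocks₂₁ * G.toBlocks₁₁.adjugate * G.toBlocks₁₂).adjugate : Matrix _ _ P)).map ψ
        := by rw [ffSchur_lhs_map, e11, e12, e21, e22]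
    _ = B11.det ^ (m - 2) • (fromBlocks B11 B12 B21 B22).adjugate.toBlocks₂₂ := by
        rw [hgen, ffSchur_rhs_map, e11, e12, e21, e22]

theorem ffSchur_totalDegree_adjugate_le {R σ : Type*} [CommRing R] {n : Type*} [Fintype n]
    [DecidableEq n] (M : Matrix n n (MvPolynomial σ R)) (d : ℕ)
    (h : ∀ i j, (M i j).totalDegree ≤ d) (i j : n) :
    ((M.adjugate) i j).totalDegree ≤ (Fintype.card n - 1) * d := by
  rw [Matrix.adjugate_apply, Matrix.det_apply]
  refine (MvPolynomial.totalDegree_finset_sum _ _).trans (Finset.sup_le fun π _ => ?_)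
  refine (MvPolynomial.totalDegree_smul_le _ _).trans ?_
  refine (MvPolynomial.totalDegree_finset_prod _ _).trans ?_
  have hterm : ∀ k : n, ((M.updateRow j (Pi.single i 1)) (π k) k).totalDegree
      ≤ if π k = j then 0 else d := by
    intro k
    rw [Matrix.updateRow_apply]
    by_cases hk : π k = j
    · simp only [hk, if_pos rfl, if_true]
      rcases eq_or_ne k i with rfl | hki
      · simp
      · simp [Pi.single_eq_of_ne hki]
    · simpa [hk] using h (π k) k
  refine (Finset.sum_le_sum fun k _ => hterm k).trans ?_
  have hfilter : (Finset.univ.filter fun k : n => π k = j) = {π⁻¹ j} := by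
    ext k
    simp [Equiv.Perm.eq_inv_iff_eq, eq_comm]
    rw [eq_comm, Equiv.eq_symm_apply]
  rw [Finset.sum_ite, Finset.sum_const, Finset.sum_const, smul_zero, zero_add, smul_eq_mul]
  have hcard : (Finset.univ.filter fun k : n => ¬ π k = j).card = Fintype.card n - 1 := by
    have h2 := Finset.card_filter_add_card_filter_not
      (s := (Finset.univ : Finset n)) (p := fun k => π k = j)
    rw [hfilter] at h2
    simp only [Finset.card_singleton, Finset.card_univ] at h2
    omega
  rw [hcard]


/-- If every entry of a `2m × 2m` matrix (`m ≥ 2`) over a multivariate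
polynomial ring, given by `m × m` blocks `A11, A12, A21, A22`, has total degree at most `d`,
and `Δ = det(A11) • A22 - A21 * adj(A11) * A12`, then there is an `m × m` matrix `Q` with
`adj(Δ) = det(A11) ^ (m - 2) • Q` and every entry of `Q` of total degree at most
`(2m - 1) * d`. -/
theorem adjugate_ffSchur_factor {R : Type*} [CommRing R] {σ : Type*} (m d : ℕ) (hm : 2 ≤ m)
    (A11 A12 A21 A22 : Matrix (Fin m) (Fin m) (MvPolynomial σ R))
    (hA : ∀ i j, ((Matrix.fromBlocks A11 A12 A21 A22) i j).totalDegree ≤ d) :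
    ∃ Q : Matrix (Fin m) (Fin m) (MvPolynomial σ R),
      (A11.det • A22 - A21 * A11.adjugate * A12).adjugate = A11.det ^ (m - 2) • Q ∧
        ∀ i j, (Q i j).totalDegree ≤ (2 * m - 1) * d := by
  refine ⟨(Matrix.fromBlocks A11 A12 A21 A22).adjugate.toBlocks₂₂,
    ffSchur_key m hm A11 A12 A21 A22, fun i j => ?_⟩
  have h := ffSchur_totalDegree_adjugate_le (Matrix.fromBlocks A11 A12 A21 A22) d hA
    (Sum.inr i) (Sum.inr j)
  simp only [Fintype.card_sum, Fintype.card_fin] at h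
  have h2 : (2 * m - 1) = m + m - 1 := by omega
  rw [h2]
  exact h
end

section
/- Let R be a commutative ring, σ a type, and let n = 2^m with m ≥ 1. Let A be an n×n matrix over MvPolynomial σ R such that every entry of A has total degree at most d. Define Δ_0(A) := Δ(A) and, for 1 ≤ k ≤ m−1, Δ_k(A) := Δ(Δ_{k−1}(A)), so that Δ_k(A) is a square matrix of size n/2^(k+1). Then for all 0 ≤ k ≤ m−1, every entry of Δ_k(A) has total degree at most d · ∏_{j=0}^{k} (n/2^(j+1) + 1). -/
/-- The fraction-free Schur complement `Δ(M) = det(M11) • M22 - M21 * adj(M11) * M12`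
of a `2s × 2s` matrix `M`, where `M11, M12, M21, M22` are the `s × s` blocks
(top-left, top-right, bottom-left, bottom-right) of `M`. -/
def ffSchur {R : Type*} [CommRing R] {s : ℕ} (M : Matrix (Fin (2 * s)) (Fin (2 * s)) R) :
    Matrix (Fin s) (Fin s) R :=
  let top : Fin s → Fin (2 * s) := fun a => ⟨a.1, by have := a.2; omega⟩
  let bot : Fin s → Fin (2 * s) := fun a => ⟨s + a.1, by have := a.2; omega⟩
  let M11 := M.submatrix top top
  let M12 := M.submatrix top bot
  let M21 := M.submatrix bot top
  let M22 := M.submatrix bot bot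
  M11.det • M22 - M21 * M11.adjugate * M12

/-- Reindexing a square matrix along an equality of sizes. -/
def castMat {R : Type*} {a b : ℕ} (h : a = b) (M : Matrix (Fin a) (Fin a) R) :
    Matrix (Fin b) (Fin b) R :=
  M.submatrix (Fin.cast h.symm) (Fin.cast h.symm)

/-- The fraction-free Schur complement of a matrix of size `2 ^ (t + 1)`,
a matrix of size `2 ^ t`. -/
def ffSchurPow {R : Type*} [CommRing R] (t : ℕ)
    (M : Matrix (Fin (2 ^ (t + 1))) (Fin (2 ^ (t + 1))) R) :
    Matrix (Fin (2 ^ t)) (Fin (2 ^ t)) R :=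
  ffSchur (castMat (by rw [pow_succ]; ring) M)

/-- The iterated fraction-free Schur complement: `ffSchurIter k t M` is
`Δ_k(M) = Δ(Δ(⋯Δ(M)⋯))` (`k + 1` applications of `Δ`), taking a matrix of size
`2 ^ (t + 1 + k)` to a matrix of size `2 ^ t`. -/
def ffSchurIter {R : Type*} [CommRing R] :
    (k t : ℕ) → Matrix (Fin (2 ^ (t + 1 + k))) (Fin (2 ^ (t + 1 + k))) R →
      Matrix (Fin (2 ^ t)) (Fin (2 ^ t)) R
  | 0, t, M => ffSchurPow t M
  | k + 1, t, M => ffSchurIter k t (ffSchurPow (t + 1 + k) M)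

section Aux
variable {R : Type*} [CommRing R] {σ : Type*}
open MvPolynomial


lemma det_totalDegree_le' {n : Type*} [DecidableEq n] [Fintype n]
    (M : Matrix n n (MvPolynomial σ R)) (b : n → ℕ)
    (h : ∀ i j, (M i j).totalDegree ≤ b i) :
    M.det.totalDegree ≤ ∑ i, b i := by
  rw [Matrix.det_apply]
  refine totalDegree_finsetSum_le fun τ _ => ?_
  refine (totalDegree_smul_le _ _).trans ?_
  refine (totalDegree_finset_prod _ _).trans ?_
  calc ∑ i, (M (τ i) i).totalDegree ≤ ∑ i, b (τ i) :=
        Finset.sum_le_sum fun i _ => h _ _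
    _ = ∑ i, b i := Equiv.sum_comp τ b

lemma adjugate_totalDegree_le {s : ℕ} (M : Matrix (Fin s) (Fin s) (MvPolynomial σ R)) (D : ℕ)
    (h : ∀ i j, (M i j).totalDegree ≤ D) (i j : Fin s) :
    ((M.adjugate) i j).totalDegree ≤ (s - 1) * D := by
  rw [Matrix.adjugate_apply]
  have := det_totalDegree_le' (M.updateRow j (Pi.single i 1))
      (fun r => if r = j then 0 else D) (fun r c => by
        by_cases hr : r = j
        · subst hr
          simp only [Matrix.updateRow_self, if_pos rfl]
          by_cases hc : c = i <;> simp [Pi.single_apply, hc]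
        · rw [Matrix.updateRow_ne hr]
          simpa [hr] using h r c)
  refine this.trans ?_
  rw [← Finset.add_sum_erase _ _ (Finset.mem_univ j), if_pos rfl, zero_add,
    Finset.sum_congr rfl (fun x hx => if_neg (Finset.ne_of_mem_erase hx)),
    Finset.sum_const, Finset.card_erase_of_mem (Finset.mem_univ j)]
  simp [smul_eq_mul]

lemma ffSchur_totalDegree_le {s : ℕ} (hs : 1 ≤ s)
    (M : Matrix (Fin (2 * s)) (Fin (2 * s)) (MvPolynomial σ R)) (D : ℕ)
    (h : ∀ i j, (M i j).totalDegree ≤ D) (i j : Fin s) :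
    ((ffSchur M) i j).totalDegree ≤ (s + 1) * D := by
  set top : Fin s → Fin (2 * s) := fun a => ⟨a.1, by have := a.2; omega⟩ with htop
  set bot : Fin s → Fin (2 * s) := fun a => ⟨s + a.1, by have := a.2; omega⟩ with hbot
  have hM11 : ∀ i' j', ((M.submatrix top top) i' j').totalDegree ≤ D := fun _ _ => h _ _
  have hdet : ((M.submatrix top top).det).totalDegree ≤ s * D := by
    have := det_totalDegree_le' (M.submatrix top top) (fun _ => D) hM11
    simpa [Finset.sum_const, mul_comm] using this
  have hadj : ∀ i' j', (((M.submatrix top top).adjugate) i' j').totalDegree ≤ (s - 1) * D :=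
    fun i' j' => adjugate_totalDegree_le _ D hM11 i' j'
  show ((((M.submatrix top top).det • M.submatrix bot bot -
      M.submatrix bot top * (M.submatrix top top).adjugate * M.submatrix top bot)) i j).totalDegree
      ≤ (s + 1) * D
  simp only [Matrix.sub_apply, Matrix.smul_apply, Matrix.mul_apply, smul_eq_mul]
  refine (totalDegree_sub _ _).trans (max_le ?_ ?_)
  · refine (totalDegree_mul _ _).trans ?_
    calc _ ≤ s * D + D := add_le_add hdet (h _ _)
      _ = (s + 1) * D := by ring
  · refine totalDegree_finsetSum_le fun c _ => ?_
    refine (totalDegree_mul _ _).trans ?_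
    have hsum : (∑ b : Fin s, (M.submatrix bot top) i b *
        ((M.submatrix top top).adjugate) b c).totalDegree ≤ D + (s - 1) * D :=
      totalDegree_finsetSum_le fun b _ =>
        (totalDegree_mul _ _).trans (add_le_add (h _ _) (hadj _ _))
    calc _ ≤ (D + (s - 1) * D) + D := add_le_add hsum (h _ _)
      _ ≤ (s + 1) * D := by
          obtain ⟨s', rfl⟩ : ∃ s', s = s' + 1 := ⟨s - 1, by omega⟩
          simp only [Nat.add_sub_cancel]
          exact le_of_eq (by ring)

lemma castMat_apply {a b : ℕ} (h : a = b) (M : Matrix (Fin a) (Fin a) (MvPolynomial σ R))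
    (i j : Fin b) : castMat h M i j = M (Fin.cast h.symm i) (Fin.cast h.symm j) := rfl

lemma ffSchurPow_totalDegree_le (t : ℕ)
    (M : Matrix (Fin (2 ^ (t + 1))) (Fin (2 ^ (t + 1))) (MvPolynomial σ R)) (D : ℕ)
    (h : ∀ i j, (M i j).totalDegree ≤ D) (i j : Fin (2 ^ t)) :
    ((ffSchurPow t M) i j).totalDegree ≤ (2 ^ t + 1) * D :=
  ffSchur_totalDegree_le Nat.one_le_two_pow _ D (fun _ _ => h _ _) i j

lemma ffSchurIter_totalDegree_le :
    ∀ (k t : ℕ) (M : Matrix (Fin (2 ^ (t + 1 + k))) (Fin (2 ^ (t + 1 + k))) (MvPolynomial σ R))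
      (D : ℕ), (∀ i j, (M i j).totalDegree ≤ D) →
      ∀ i j, ((ffSchurIter k t M) i j).totalDegree ≤
        D * ∏ l ∈ Finset.range (k + 1), (2 ^ (t + k - l) + 1)
  | 0, t, M, D, h, i, j => by
    simpa [ffSchurIter, mul_comm] using ffSchurPow_totalDegree_le t M D h i j
  | k + 1, t, M, D, h, i, j => by
    have hstep := ffSchurPow_totalDegree_le (t + 1 + k) M D h
    have := ffSchurIter_totalDegree_le k t (ffSchurPow (t + 1 + k) M)
      ((2 ^ (t + 1 + k) + 1) * D) hstep i j
    refine this.trans_eq ?_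
    have hprod : ∏ l ∈ Finset.range (k + 1 + 1), (2 ^ (t + (k + 1) - l) + 1)
        = (∏ l ∈ Finset.range (k + 1), (2 ^ (t + k - l) + 1)) * (2 ^ (t + 1 + k) + 1) := by
      rw [Finset.prod_range_succ']
      congr 1
      · exact Finset.prod_congr rfl (fun l _ => by congr 2; omega)
      · congr 2
        omega
    rw [hprod]
    ring


end Aux

/-- Let `n = 2 ^ m` with `m ≥ 1`, and let `A` be an `n × n` matrix of
multivariate polynomials of total degree at most `d`.  Then for all `0 ≤ k ≤ m - 1`, every
entry of the iterated fraction-free Schur complement `Δ_k(A)` (a matrix of size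
`n / 2 ^ (k + 1)`) has total degree at most `d * ∏_{j = 0}^{k} (n / 2 ^ (j + 1) + 1)`. -/
theorem totalDegree_ffSchurIter_le {R : Type*} [CommRing R] {σ : Type*} (m d : ℕ)
    (hm : 1 ≤ m) (A : Matrix (Fin (2 ^ m)) (Fin (2 ^ m)) (MvPolynomial σ R))
    (hA : ∀ i j, (A i j).totalDegree ≤ d) (k : ℕ) (hk : k ≤ m - 1) :
    ∀ i j, ((ffSchurIter k (m - 1 - k)
          (castMat (by rw [show m - 1 - k + 1 + k = m from by omega]) A)) i j).totalDegree ≤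
      d * ∏ l ∈ Finset.range (k + 1), (2 ^ m / 2 ^ (l + 1) + 1) := by
  intro i j
  have := ffSchurIter_totalDegree_le k (m - 1 - k)
    (castMat (by rw [show m - 1 - k + 1 + k = m from by omega]) A) d
    (fun i j => hA _ _) i j
  refine this.trans_eq ?_
  congr 1
  refine Finset.prod_congr rfl fun l hl => ?_
  rw [Finset.mem_range] at hl
  congr 1
  rw [Nat.pow_div (by omega) (by norm_num)]
  congr 1
  omega
end

section
/- Let n = 2^m with m ≥ 2, let P = MvPolynomial ((Fin n) × (Fin n)) ℚ, let F be the field of fractions of P, and let A be the generic n×n matrix over F whose (i,j) entry is the image of the variable x_{ij}. For 1 ≤ s ≤ n let A_{1..s} denote the leading principal s×s submatrix of A. Define E_0 := Δ(A) and, for i ≥ 1, E_i := c_i⁻¹ • Δ(E_{i−1}) in F, where c_i := det(A_{1..(2^i−1)n/2^i})^(n/2^(i+1)). Then for all 0 ≤ i ≤ m−2, every entry of E_i lies in the image of P in F, and its (unique) preimage polynomial has total degree at most ((2^(i+1)−1)·n)/2^(i+1) + 1. -/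
/-- `leadDet A s` is the determinant of the leading principal `s × s` submatrix
`A_{1..s}` of `A` (and junk value `0` if `s` exceeds the size of `A`;
in particular `leadDet A 0 = 1`, the determinant of the empty matrix). -/
def leadDet {F : Type*} [CommRing F] {n : ℕ} (A : Matrix (Fin n) (Fin n) F) (s : ℕ) : F :=
  if h : s ≤ n then (A.submatrix (Fin.castLE h) (Fin.castLE h)).det else 0

/-- The generic `n × n` matrix over the fraction field of
`P = MvPolynomial (Fin n × Fin n) ℚ`, whose `(i, j)` entry is the image of the
variable `x_{i j}`. -/
noncomputable def genericMatrix (n : ℕ) :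
    Matrix (Fin n) (Fin n) (FractionRing (MvPolynomial (Fin n × Fin n) ℚ)) :=
  fun i j => algebraMap (MvPolynomial (Fin n × Fin n) ℚ) _ (MvPolynomial.X (i, j))

open Matrix

namespace PDC

variable {F : Type*} [Field F]

/-- the embedding of trailing indices -/
def tIdx {N : ℕ} (j : ℕ) (h : j ≤ N) (a : Fin (N - j)) : Fin N := ⟨j + a.1, by omega⟩

/-- leading principal block -/
def ldB {N : ℕ} (B : Matrix (Fin N) (Fin N) F) (j : ℕ) (h : j ≤ N) :
    Matrix (Fin j) (Fin j) F := B.submatrix (Fin.castLE h) (Fin.castLE h)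

/-- (classical) Schur complement w.r.t. leading `j` block -/
noncomputable def scB {N : ℕ} (B : Matrix (Fin N) (Fin N) F) (j : ℕ) (h : j ≤ N) :
    Matrix (Fin (N - j)) (Fin (N - j)) F :=
  B.submatrix (tIdx j h) (tIdx j h)
    - B.submatrix (tIdx j h) (Fin.castLE h) * (ldB B j h)⁻¹
       * B.submatrix (Fin.castLE h) (tIdx j h)

def sumEquiv (j N : ℕ) (h : j ≤ N) : (Fin j ⊕ Fin (N - j)) ≃ Fin N where
  toFun := Sum.elim (Fin.castLE h) (tIdx j h)
  invFun := fun a => if h2 : (a : ℕ) < j then .inl ⟨a, h2⟩ else .inr ⟨a - j, by omega⟩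
  left_inv := by
    rintro (a | a)
    · simp [tIdx]
    · have : ¬ ((tIdx j h a : ℕ) < j) := by simp [tIdx]
      simp only [Sum.elim_inr, this, dif_neg, not_false_iff]
      refine (dif_neg this).trans ?_
      congr 1
      ext
      simp [tIdx]
  right_inv := by
    intro a
    by_cases h2 : (a : ℕ) < j
    · simp only [dif_pos h2, Sum.elim_inl]
      rfl
    · simp only [h2, dif_neg, not_false_iff, Sum.elim_inr]
      ext
      simp [tIdx]
      omega

lemma det_border {N : ℕ} (B : Matrix (Fin N) (Fin N) F) (j : ℕ) (h : j ≤ N)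
    {β : Type*} [Fintype β] [DecidableEq β] (r c : β → Fin N)
    (hu : IsUnit (ldB B j h).det) :
    (B.submatrix (Sum.elim (Fin.castLE h) r) (Sum.elim (Fin.castLE h) c)).det
      = (ldB B j h).det *
        (B.submatrix r c - B.submatrix r (Fin.castLE h) * (ldB B j h)⁻¹
          * B.submatrix (Fin.castLE h) c).det := by
  letI : Invertible (ldB B j h) := (ldB B j h).invertibleOfIsUnitDet hu
  have hM : B.submatrix (Sum.elim (Fin.castLE h) r) (Sum.elim (Fin.castLE h) c)
      = fromBlocks (ldB B j h) (B.submatrix (Fin.castLE h) c)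
          (B.submatrix r (Fin.castLE h)) (B.submatrix r c) := by
    ext i k
    cases i <;> cases k <;> rfl
  rw [hM, det_fromBlocks₁₁, invOf_eq_nonsing_inv]

lemma det_eq_ld_mul_sc {N : ℕ} (B : Matrix (Fin N) (Fin N) F) (j : ℕ) (h : j ≤ N)
    (hu : IsUnit (ldB B j h).det) :
    B.det = (ldB B j h).det * (scB B j h).det := by
  have := det_border B j h (tIdx j h) (tIdx j h) hu
  rw [show B.submatrix (Sum.elim (Fin.castLE h) (tIdx j h)) (Sum.elim (Fin.castLE h) (tIdx j h))
      = B.submatrix (sumEquiv j N h) (sumEquiv j N h) from rfl,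
    det_submatrix_equiv_self] at this
  rw [this]
  rfl

lemma isUnit_sc_det {N : ℕ} (B : Matrix (Fin N) (Fin N) F) (j : ℕ) (h : j ≤ N)
    (hB : IsUnit B.det) (hu : IsUnit (ldB B j h).det) :
    IsUnit (scB B j h).det := by
  have := det_eq_ld_mul_sc B j h hu
  rw [this] at hB
  exact (isUnit_of_mul_isUnit_right (by rwa [mul_comm] at hB))

lemma sc_inv {N : ℕ} (B : Matrix (Fin N) (Fin N) F) (j : ℕ) (h : j ≤ N)
    (hB : IsUnit B.det) (hu : IsUnit (ldB B j h).det) :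
    (scB B j h)⁻¹ = (B⁻¹).submatrix (tIdx j h) (tIdx j h) := by
  letI : Invertible (ldB B j h) := (ldB B j h).invertibleOfIsUnitDet hu
  letI : Invertible B := B.invertibleOfIsUnitDet hB
  have hsc : IsUnit (scB B j h).det := isUnit_sc_det B j h hB hu
  set A11 := ldB B j h
  set B12 := B.submatrix (Fin.castLE h) (tIdx j h)
  set C21 := B.submatrix (tIdx j h) (Fin.castLE h)
  set D22 := B.submatrix (tIdx j h) (tIdx j h)
  have hschur : D22 - C21 * ⅟A11 * B12 = scB B j h := by
    rw [invOf_eq_nonsing_inv]; rfl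
  letI : Invertible (D22 - C21 * ⅟A11 * B12) := by
    refine (D22 - C21 * ⅟A11 * B12).invertibleOfIsUnitDet ?_
    rw [hschur]; exact hsc
  have hM : B.submatrix (sumEquiv j N h) (sumEquiv j N h)
      = fromBlocks A11 B12 C21 D22 := by
    ext i k
    cases i <;> cases k <;> rfl
  letI : Invertible (fromBlocks A11 B12 C21 D22) := by
    rw [← hM]; exact submatrixEquivInvertible B _ _
  have hinv := invOf_fromBlocks₁₁_eq A11 B12 C21 D22
  have h3 : ⅟(fromBlocks A11 B12 C21 D22)
      = (B⁻¹).submatrix (sumEquiv j N h) (sumEquiv j N h) := by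
    rw [invOf_eq_nonsing_inv, ← hM, inv_submatrix_equiv]
  have h4 : (scB B j h)⁻¹ = ⅟(D22 - C21 * ⅟A11 * B12) := by
    rw [invOf_eq_nonsing_inv, hschur]
  ext a b
  have h5 := congrFun (congrFun (h3.symm.trans hinv) (Sum.inr a)) (Sum.inr b)
  simp only [fromBlocks_apply₂₂, submatrix_apply] at h5
  rw [h4, ← h5]
  rfl

/-! block-of-schur determinant relation -/

lemma det_ld_sc {N : ℕ} (B : Matrix (Fin N) (Fin N) F) (j t : ℕ) (h : j + t ≤ N)
    (hj : j ≤ N) (ht : t ≤ N - j)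
    (hu : IsUnit (ldB B j hj).det) :
    (ldB B (j + t) h).det
      = (ldB B j hj).det * (ldB (scB B j hj) t ht).det := by
  have hr := det_border B j hj
    (fun p : Fin t => (⟨j + p.1, by omega⟩ : Fin N))
    (fun p : Fin t => (⟨j + p.1, by omega⟩ : Fin N)) hu
  have h1 : B.submatrix
      (Sum.elim (Fin.castLE hj) (fun p : Fin t => (⟨j + p.1, by omega⟩ : Fin N)))
      (Sum.elim (Fin.castLE hj) (fun p : Fin t => (⟨j + p.1, by omega⟩ : Fin N)))
      = (ldB B (j + t) h).submatrix finSumFinEquiv finSumFinEquiv := by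
    ext i k
    cases i <;> cases k <;> rfl
  rw [h1, det_submatrix_equiv_self] at hr
  rw [hr]
  congr 1

lemma isUnit_ld_sc {N : ℕ} (B : Matrix (Fin N) (Fin N) F) (j t : ℕ) (h : j + t ≤ N)
    (hj : j ≤ N) (ht : t ≤ N - j)
    (hu : IsUnit (ldB B j hj).det) (hu2 : IsUnit (ldB B (j + t) h).det) :
    IsUnit (ldB (scB B j hj) t ht).det := by
  rw [det_ld_sc B j t h hj ht hu] at hu2
  exact isUnit_of_mul_isUnit_right hu2

lemma castMat_inv {a b : ℕ} (h : a = b) (M : Matrix (Fin a) (Fin a) F) :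
    (castMat h M)⁻¹ = castMat h M⁻¹ := by
  have : castMat h M = M.submatrix (finCongr h.symm) (finCongr h.symm) := rfl
  rw [this, inv_submatrix_equiv]
  rfl

lemma castMat_det {R : Type*} [CommRing R] {a b : ℕ} (h : a = b)
    (M : Matrix (Fin a) (Fin a) R) : (castMat h M).det = M.det := by
  have : castMat h M = M.submatrix (finCongr h.symm) (finCongr h.symm) := rfl
  rw [this, det_submatrix_equiv_self]

/-- quotient property : Schur complement of a Schur complement -/
lemma sc_sc {N : ℕ} (B : Matrix (Fin N) (Fin N) F) (j t : ℕ) (h : j + t ≤ N)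
    (hj : j ≤ N) (ht : t ≤ N - j) (hc : N - (j + t) = N - j - t)
    (hB : IsUnit B.det) (huj : IsUnit (ldB B j hj).det)
    (hujt : IsUnit (ldB B (j + t) h).det) :
    scB (scB B j hj) t ht = castMat hc (scB B (j + t) h) := by
  have hsc1 : IsUnit (scB B j hj).det := isUnit_sc_det B j hj hB huj
  have hld2 : IsUnit (ldB (scB B j hj) t ht).det := isUnit_ld_sc B j t h hj ht huj hujt
  have hsc2 : IsUnit (scB (scB B j hj) t ht).det := isUnit_sc_det _ t ht hsc1 hld2
  have hsc3 : IsUnit (scB B (j + t) h).det := isUnit_sc_det B (j + t) h hB hujt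
  have hinv : (scB (scB B j hj) t ht)⁻¹ = (castMat hc (scB B (j + t) h))⁻¹ := by
    rw [sc_inv _ t ht hsc1 hld2, sc_inv B j hj hB huj, castMat_inv,
      sc_inv B (j + t) h hB hujt]
    have e : ∀ a : Fin (N - j - t),
        tIdx j hj (tIdx t ht a) = tIdx (j + t) h (Fin.cast hc.symm a) := by
      intro a
      ext
      show j + (t + a.1) = (j + t) + a.1
      omega
    ext a b
    show B⁻¹ (tIdx j hj (tIdx t ht a)) (tIdx j hj (tIdx t ht b))
      = B⁻¹ (tIdx (j + t) h (Fin.cast hc.symm a)) (tIdx (j + t) h (Fin.cast hc.symm b))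
    rw [e a, e b]
  have := congrArg Inv.inv hinv
  rwa [nonsing_inv_nonsing_inv _ hsc2, nonsing_inv_nonsing_inv] at this
  rw [castMat_det]
  exact hsc3

/-- adjugate via inverse over a field -/
lemma adjugate_eq_det_smul_inv {s : ℕ} (M : Matrix (Fin s) (Fin s) F)
    (hu : IsUnit M.det) : M.adjugate = M.det • M⁻¹ := by
  rw [inv_def, smul_smul, mul_comm, Ring.inverse_mul_cancel _ hu, one_smul]


def fTop (s : ℕ) : Fin s → Fin (2 * s) := fun a => ⟨a.1, by have := a.2; omega⟩
def fBot (s : ℕ) : Fin s → Fin (2 * s) := fun a => ⟨s + a.1, by have := a.2; omega⟩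

lemma ffSchur_def {R : Type*} [CommRing R] {s : ℕ} (M : Matrix (Fin (2 * s)) (Fin (2 * s)) R) :
    ffSchur M =
      (M.submatrix (fTop s) (fTop s)).det • M.submatrix (fBot s) (fBot s)
        - M.submatrix (fBot s) (fTop s) * (M.submatrix (fTop s) (fTop s)).adjugate
          * M.submatrix (fTop s) (fBot s) := rfl

lemma ffSchur_smul {R : Type*} [CommRing R] {s : ℕ} (hs : 0 < s) (c : R)
    (M : Matrix (Fin (2 * s)) (Fin (2 * s)) R) :
    ffSchur (c • M) = c ^ (s + 1) • ffSchur M := by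
  rw [ffSchur_def, ffSchur_def]
  have hsub : ∀ {k l : ℕ} (f : Fin k → Fin (2 * s)) (g : Fin l → Fin (2 * s)),
      (c • M).submatrix f g = c • M.submatrix f g := fun _ _ => rfl
  rw [hsub, hsub, hsub, hsub, det_smul, adjugate_smul]
  have h1 : (c ^ Fintype.card (Fin s) * (M.submatrix (fTop s) (fTop s)).det)
        • (c • M.submatrix (fBot s) (fBot s))
      = c ^ (s + 1) • ((M.submatrix (fTop s) (fTop s)).det • M.submatrix (fBot s) (fBot s)) := by
    rw [smul_smul, smul_smul]
    congr 1
    rw [Fintype.card_fin, pow_succ]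
    ring
  have h2 : (c • M.submatrix (fBot s) (fTop s))
        * (c ^ (Fintype.card (Fin s) - 1) • (M.submatrix (fTop s) (fTop s)).adjugate)
        * (c • M.submatrix (fTop s) (fBot s))
      = c ^ (s + 1) • (M.submatrix (fBot s) (fTop s)
          * (M.submatrix (fTop s) (fTop s)).adjugate * M.submatrix (fTop s) (fBot s)) := by
    simp only [Matrix.smul_mul, Matrix.mul_smul, smul_smul]
    congr 1
    rw [Fintype.card_fin, show s + 1 = 1 + (s - 1) + 1 from by omega, pow_add, pow_add, pow_one]
    ring
  rw [h1, h2, ← smul_sub]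

lemma ffSchur_cast_eq {N s : ℕ} (h : N = 2 * s) (B : Matrix (Fin N) (Fin N) F)
    (hs : s ≤ N) (hc : N - s = s)
    (hu : IsUnit (ldB B s hs).det) :
    ffSchur (castMat h B) = (ldB B s hs).det • castMat hc (scB B s hs) := by
  rw [ffSchur_def]
  have hadj := adjugate_eq_det_smul_inv ((castMat h B).submatrix (fTop s) (fTop s)) hu
  rw [hadj, Matrix.mul_smul, Matrix.smul_mul, ← smul_sub]
  rfl


lemma isUnit_ld_generic (n k : ℕ) (h : k ≤ n) :
    IsUnit (ldB (genericMatrix n) k h).det := by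
  set P := MvPolynomial (Fin n × Fin n) ℚ
  set Mk : Matrix (Fin k) (Fin k) P :=
    Matrix.of fun i j : Fin k => MvPolynomial.X (Fin.castLE h i, Fin.castLE h j) with hMk
  have hmap : ldB (genericMatrix n) k h = Mk.map (algebraMap P (FractionRing P)) := rfl
  rw [hmap, ← RingHom.mapMatrix_apply, ← RingHom.map_det]
  rw [isUnit_iff_ne_zero]
  intro h0
  have hdet0 : Mk.det = 0 := IsFractionRing.injective P (FractionRing P) (by rw [map_zero]; exact h0)
  have hev := congrArg (MvPolynomial.eval
    (fun p : Fin n × Fin n => if p.1 = p.2 then (1 : ℚ) else 0)) hdet0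
  rw [RingHom.map_det, map_zero, RingHom.mapMatrix_apply] at hev
  have hone : Mk.map (MvPolynomial.eval
      (fun p : Fin n × Fin n => if p.1 = p.2 then (1 : ℚ) else 0)) = 1 := by
    ext i j
    simp only [hMk, Matrix.map_apply, Matrix.of_apply, MvPolynomial.eval_X, Matrix.one_apply]
    by_cases hij : i = j
    · simp [hij]
    · rw [if_neg hij, if_neg (by simpa [Fin.castLE_inj] using hij)]
  rw [hone, det_one] at hev
  exact one_ne_zero hev

lemma totalDegree_det_le {σ : Type*} {ι : Type*} [Fintype ι] [DecidableEq ι]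
    (M : Matrix ι ι (MvPolynomial σ ℚ)) (hM : ∀ i j, (M i j).totalDegree ≤ 1) :
    M.det.totalDegree ≤ Fintype.card ι := by
  rw [det_apply]
  refine (MvPolynomial.totalDegree_finset_sum _ _).trans ?_
  apply Finset.sup_le
  intro σ' _
  refine (MvPolynomial.totalDegree_smul_le _ _).trans ?_
  refine (MvPolynomial.totalDegree_finset_prod _ _).trans ?_
  calc ∑ i, (M (σ' i) i).totalDegree ≤ ∑ _i : ι, 1 := Finset.sum_le_sum fun i _ => hM _ _
  _ = Fintype.card ι := by simp

lemma poly_entry (n k : ℕ) (h : k ≤ n) (a b : Fin (n - k)) :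
    ∃ p : MvPolynomial (Fin n × Fin n) ℚ,
      algebraMap (MvPolynomial (Fin n × Fin n) ℚ)
          (FractionRing (MvPolynomial (Fin n × Fin n) ℚ)) p
        = (ldB (genericMatrix n) k h).det * scB (genericMatrix n) k h a b
      ∧ p.totalDegree ≤ k + 1 := by
  set P := MvPolynomial (Fin n × Fin n) ℚ
  set A := genericMatrix n with hA
  have hu := isUnit_ld_generic n k h
  set r : Unit → Fin n := fun _ => tIdx k h a with hr
  set c : Unit → Fin n := fun _ => tIdx k h b with hc
  have hdb := det_border A k h r c hu
  have h1 : (A.submatrix r c - A.submatrix r (Fin.castLE h) * (ldB A k h)⁻¹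
      * A.submatrix (Fin.castLE h) c).det = scB A k h a b := by
    rw [det_unique]
    rfl
  refine ⟨(Matrix.of fun i j : Fin k ⊕ Unit =>
      MvPolynomial.X (Sum.elim (Fin.castLE h) r i, Sum.elim (Fin.castLE h) c j)).det, ?_, ?_⟩
  · rw [RingHom.map_det, RingHom.mapMatrix_apply]
    have h2 : (Matrix.of fun i j : Fin k ⊕ Unit =>
        MvPolynomial.X (Sum.elim (Fin.castLE h) r i, Sum.elim (Fin.castLE h) c j)).map
          (algebraMap P (FractionRing P))
        = A.submatrix (Sum.elim (Fin.castLE h) r) (Sum.elim (Fin.castLE h) c) := rfl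
    rw [h2, hdb, h1]
  · refine (totalDegree_det_le _ fun i j => ?_).trans ?_
    · simp [MvPolynomial.totalDegree_X]
    · simp


lemma castMat_smul {R : Type*} [CommRing R] {a b : ℕ} (h : a = b) (c : R)
    (M : Matrix (Fin a) (Fin a) R) : castMat h (c • M) = c • castMat h M := rfl

lemma castMat_castMat {R : Type*} {a b c : ℕ} (h1 : a = b) (h2 : b = c)
    (M : Matrix (Fin a) (Fin a) R) :
    castMat h2 (castMat h1 M) = castMat (h1.trans h2) M := rfl

lemma ld_sc_congr {n : ℕ} (B : Matrix (Fin n) (Fin n) F) {k1 k2 t : ℕ} (hkk : k1 = k2)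
    (h1 : k1 ≤ n) (h2 : k2 ≤ n) (hc1 : n - k1 = t) (hc2 : n - k2 = t) :
    (ldB B k1 h1).det • castMat hc1 (scB B k1 h1)
      = (ldB B k2 h2).det • castMat hc2 (scB B k2 h2) := by
  subst hkk
  rfl

lemma div_pow (j M : ℕ) (h : j ≤ M) : (2 ^ j - 1) * 2 ^ M / 2 ^ j = 2 ^ M - 2 ^ (M - j) := by
  have h1 : (2 : ℕ) ^ M = 2 ^ (M - j) * 2 ^ j := by rw [← pow_add]; congr 1; omega
  have h2 : (2 ^ j - 1) * 2 ^ M = (2 ^ M - 2 ^ (M - j)) * 2 ^ j := by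
    rw [Nat.sub_mul, Nat.sub_mul, one_mul, ← h1, mul_comm ((2 : ℕ) ^ j)]
  rw [h2, Nat.mul_div_cancel _ (Nat.two_pow_pos j)]

lemma lead_det_eq {n : ℕ} (B : Matrix (Fin n) (Fin n) F) (k : ℕ) (h : k ≤ n) :
    leadDet B k = (ldB B k h).det := by
  rw [leadDet, dif_pos h]
  rfl

end PDC

open PDC

/-- Let `n = 2 ^ m` with `m ≥ 2`, `P = MvPolynomial (Fin n × Fin n) ℚ`,
`F` its fraction field, and `A` the generic `n × n` matrix over `F`.  Define `E_0 = Δ(A)`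
and, for `i ≥ 1`, `E_i = c_i⁻¹ • Δ(E_{i-1})` where
`c_i = det(A_{1..(2^i - 1)n/2^i}) ^ (n / 2^(i+1))`.  Then for all `0 ≤ i ≤ m - 2` every
entry of `E_i` lies in the image of `P` in `F`, with preimage polynomial of total degree
at most `(2^(i+1) - 1) * n / 2^(i+1) + 1`. -/
theorem pureDelta_cancellation (m : ℕ) (hm : 2 ≤ m)
    (E : (i : ℕ) → Matrix (Fin (2 ^ (m - 1 - i))) (Fin (2 ^ (m - 1 - i)))
      (FractionRing (MvPolynomial (Fin (2 ^ m) × Fin (2 ^ m)) ℚ)))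
    (hE0 : E 0 = ffSchur (castMat (show (2:ℕ) ^ m = 2 * 2 ^ (m - 1) by
        conv_lhs => rw [show m = (m - 1) + 1 from by omega]
        rw [pow_succ]; ring) (genericMatrix (2 ^ m))))
    (hEstep : ∀ (i : ℕ) (hi1 : 1 ≤ i) (hi2 : i ≤ m - 2),
      E i = (leadDet (genericMatrix (2 ^ m)) ((2 ^ i - 1) * 2 ^ m / 2 ^ i)
              ^ (2 ^ m / 2 ^ (i + 1)))⁻¹ •
        ffSchur (castMat (show (2:ℕ) ^ (m - 1 - (i - 1)) = 2 * 2 ^ (m - 1 - i) by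
          rw [show m - 1 - (i - 1) = m - 1 - i + 1 from by omega, pow_succ]; ring)
          (E (i - 1)))) :
    ∀ i : ℕ, i ≤ m - 2 → ∀ a b, ∃ p : MvPolynomial (Fin (2 ^ m) × Fin (2 ^ m)) ℚ,
      algebraMap (MvPolynomial (Fin (2 ^ m) × Fin (2 ^ m)) ℚ)
          (FractionRing (MvPolynomial (Fin (2 ^ m) × Fin (2 ^ m)) ℚ)) p = E i a b ∧
        p.totalDegree ≤ (2 ^ (i + 1) - 1) * 2 ^ m / 2 ^ (i + 1) + 1 := by
  set A := genericMatrix (2 ^ m) with hA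
  have hA_unit : ∀ (k : ℕ) (h : k ≤ 2 ^ m), IsUnit (ldB A k h).det :=
    fun k h => isUnit_ld_generic (2 ^ m) k h
  have key : ∀ i : ℕ, i ≤ m - 2 →
      ∀ (hk : 2 ^ m - 2 ^ (m - 1 - i) ≤ 2 ^ m)
        (hc : 2 ^ m - (2 ^ m - 2 ^ (m - 1 - i)) = 2 ^ (m - 1 - i)),
      E i = (ldB A (2 ^ m - 2 ^ (m - 1 - i)) hk).det •
        castMat hc (scB A (2 ^ m - 2 ^ (m - 1 - i)) hk) := by
    intro i
    induction i with
    | zero =>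
      intro _ hk hc
      simp only [Nat.sub_zero] at hk hc ⊢
      have hN : (2 : ℕ) ^ m = 2 * 2 ^ (m - 1) := by
        conv_lhs => rw [show m = (m - 1) + 1 from by omega]
        rw [pow_succ]; ring
      have hs0 : 2 ^ (m - 1) ≤ 2 ^ m := Nat.pow_le_pow_right (by norm_num) (by omega)
      have hc0 : 2 ^ m - 2 ^ (m - 1) = 2 ^ (m - 1) := by omega
      rw [hE0, ffSchur_cast_eq hN A hs0 hc0 (hA_unit _ _)]
      exact ld_sc_congr A (by omega) hs0 hk hc0 hc
    | succ i IH =>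
      intro hi hk hc
      have hi' : i ≤ m - 2 := by omega
      -- abbreviations
      have e1 : (2 : ℕ) ^ (m - 1 - i) = 2 * 2 ^ (m - 1 - (i + 1)) := by
        rw [show m - 1 - i = m - 1 - (i + 1) + 1 from by omega, pow_succ]; ring
      have e2 : (2 : ℕ) ^ (m - 1 - i) ≤ 2 ^ m := Nat.pow_le_pow_right (by norm_num) (by omega)
      have e3 : (1 : ℕ) ≤ 2 ^ (m - 1 - (i + 1)) := Nat.one_le_two_pow
      set s : ℕ := 2 ^ (m - 1 - (i + 1)) with hs
      set k : ℕ := 2 ^ m - 2 ^ (m - 1 - i) with hkdef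
      have hkk : k ≤ 2 ^ m := Nat.sub_le _ _
      have hcc0 : 2 ^ m - k = 2 ^ (m - 1 - i) := by omega
      have hstep : E (i + 1)
          = (leadDet A ((2 ^ (i + 1) - 1) * 2 ^ m / 2 ^ (i + 1))
              ^ (2 ^ m / 2 ^ (i + 1 + 1)))⁻¹ •
            ffSchur (castMat e1 (E i)) := hEstep (i + 1) (by omega) hi
      rw [hstep, IH hi' hkk hcc0]
      -- rewrite the scalar c
      have harg : (2 ^ (i + 1) - 1) * 2 ^ m / 2 ^ (i + 1) = k := by
        rw [div_pow (i + 1) m (by omega)]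
        congr 1
        congr 1
        omega
      have hexp : 2 ^ m / 2 ^ (i + 1 + 1) = s := by
        rw [Nat.pow_div (by omega) (by norm_num)]
        congr 1
        omega
      rw [harg, hexp, lead_det_eq A k hkk]
      -- now massage the matrix part
      have hcast : (2 : ℕ) ^ (m - 1 - i) = 2 * s := e1
      rw [castMat_smul, castMat_castMat]
      have hcc : 2 ^ m - k = 2 * s := by omega
      have hks : k + s ≤ 2 ^ m := by omega
      have hs' : s ≤ 2 ^ m - k := by omega
      have hc' : 2 ^ m - k - s = s := by omega
      have hA_det : IsUnit A.det := by
        have : A.det = (ldB A (2 ^ m) le_rfl).det := rfl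
        rw [this]; exact hA_unit _ _
      have huW : IsUnit (ldB (scB A k hkk) s hs').det :=
        isUnit_ld_sc A k s hks hkk hs' (hA_unit _ _) (hA_unit _ _)
      rw [ffSchur_smul e3 _ _, ffSchur_cast_eq (hcc0.trans hcast) (scB A k hkk) hs' hc' huW]
      rw [sc_sc A k s hks hkk hs' (by omega) hA_det (hA_unit _ _) (hA_unit _ _),
        castMat_castMat]
      rw [smul_smul, smul_smul]
      have hsc_det := det_ld_sc A k s hks hkk hs' (hA_unit _ _)
      have hdk_ne : (ldB A k hkk).det ≠ 0 := (hA_unit k hkk).ne_zero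
      have hscalar : ((ldB A k hkk).det ^ s)⁻¹ *
          (ldB A k hkk).det ^ (s + 1) * (ldB (scB A k hkk) s hs').det
          = (ldB A (k + s) hks).det := by
        rw [hsc_det, pow_succ]
        field_simp
      rw [hscalar]
      exact ld_sc_congr A (by omega) hks hk (by omega) hc
  -- conclude
  intro i hi a b
  have hple : (2 : ℕ) ^ (m - 1 - i) ≤ 2 ^ m := Nat.pow_le_pow_right (by norm_num) (by omega)
  have hk : 2 ^ m - 2 ^ (m - 1 - i) ≤ 2 ^ m := Nat.sub_le _ _
  have hc : 2 ^ m - (2 ^ m - 2 ^ (m - 1 - i)) = 2 ^ (m - 1 - i) := by omega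
  have hEi := key i hi hk hc
  set kk : ℕ := 2 ^ m - 2 ^ (m - 1 - i) with hkk
  obtain ⟨p, hp1, hp2⟩ := poly_entry (2 ^ m) kk hk
    (Fin.cast hc.symm a) (Fin.cast hc.symm b)
  refine ⟨p, ?_, ?_⟩
  · rw [hp1, hEi]
    rfl
  · refine hp2.trans ?_
    have : (2 ^ (i + 1) - 1) * 2 ^ m / 2 ^ (i + 1) = kk := by
      rw [div_pow (i + 1) m (by omega)]
      congr 2
      omega
    omega
end
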